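/- arXiv:0904.2237 — 7 statements merged into one kernel-verified Lean document; each statement's English description precedes it below -/
import Mathlib

section
/- Let q = 2^n and let k be a positive integer with d = gcd(n,k). The number of triples (x,y,z) in F_q^3 satisfying x + y + z = 0, x^{2^k+1} + y^{2^k+1} + z^{2^k+1} = 0, and x^{2^{2k}+1} + y^{2^{2k}+1} + z^{2^{2k}+1} = 0 equals 2^{n+d} + 2^n - 2^d. -/
open Polynomial

set_option linter.unusedSectionVars false

section Aux

variable {F : Type*} [Field F] [CharP F 2]

lemma frob_pow_inj (j : ℕ) : Function.Injective (fun x : F => x ^ (2 ^ j)) := by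
  intro a b h
  have h0 : (a - b) ^ (2 ^ j) = 0 := by
    rw [sub_pow_char_pow]; simpa [sub_eq_zero] using h
  have := pow_eq_zero_iff (pow_ne_zero j (two_ne_zero)) |>.mp h0
  exact sub_eq_zero.mp this

lemma fix_mul (u : F) {m : ℕ} (h : u ^ 2 ^ m = u) (t : ℕ) : u ^ 2 ^ (m * t) = u := by
  induction t with
  | zero => simp
  | succ t ih =>
    have hmt : m * (t + 1) = m * t + m := by ring
    rw [hmt, pow_add, pow_mul, ih, h]

lemma fix_gcd : ∀ (m j : ℕ) (u : F), u ^ 2 ^ m = u → u ^ 2 ^ j = u →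
    u ^ 2 ^ (Nat.gcd m j) = u := by
  intro m j
  induction m, j using Nat.gcd.induction with
  | H0 j => intro u _ h2; simpa using h2
  | H1 m j hm ih =>
    intro u h1 h2
    rw [Nat.gcd_rec]
    refine ih u ?_ h1
    apply frob_pow_inj (m * (j / m))
    show (u ^ 2 ^ (j % m)) ^ 2 ^ (m * (j / m)) = u ^ 2 ^ (m * (j / m))
    rw [← pow_mul, ← pow_add, Nat.mod_add_div, h2, fix_mul u h1]

lemma expand_cond (m : ℕ) (x y : F) :
    x ^ (2 ^ m + 1) + y ^ (2 ^ m + 1) + (x + y) ^ (2 ^ m + 1)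
      = x ^ 2 ^ m * y + x * y ^ 2 ^ m := by
  have h2 : (2 : F) = 0 := CharTwo.two_eq_zero
  rw [pow_succ, pow_succ, pow_succ, add_pow_char_pow]
  linear_combination (x ^ 2 ^ m * x + y ^ 2 ^ m * y) * h2

end Aux

lemma card_fix {F : Type*} [Field F] [Fintype F] [CharP F 2] {n d : ℕ}
    (hF : Fintype.card F = 2 ^ n) (hn : n ≠ 0) (hd : d ≠ 0) (hdn : d ∣ n) :
    Nat.card {u : F // u ^ 2 ^ d = u} = 2 ^ d := by
  classical
  set f : F[X] := X ^ 2 ^ d - X with hf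
  have hsep : f.Separable := galois_poly_separable 2 (2 ^ d) (dvd_pow_self 2 hd)
  have hdeg : f.natDegree = 2 ^ d :=
    FiniteField.X_pow_card_pow_sub_X_natDegree_eq F hd one_lt_two
  have hne : f ≠ 0 := fun h => by
    have : (0 : F[X]).natDegree = 2 ^ d := h ▸ hdeg
    simp at this
    exact pow_ne_zero d two_ne_zero this.symm
  have hgdeg : (X ^ 2 ^ n - X : F[X]).natDegree = 2 ^ n :=
    FiniteField.X_pow_card_pow_sub_X_natDegree_eq F hn one_lt_two
  have hgne : (X ^ 2 ^ n - X : F[X]) ≠ 0 := fun h => by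
    have : (0 : F[X]).natDegree = 2 ^ n := h ▸ hgdeg
    simp at this
    exact pow_ne_zero n two_ne_zero this.symm
  have hg_roots : (X ^ 2 ^ n - X : F[X]).roots = Finset.univ.val := by
    have := FiniteField.roots_X_pow_card_sub_X F
    rwa [hF] at this
  have hg_splits : (X ^ 2 ^ n - X : F[X]).Splits := by
    rw [splits_iff_card_roots, hg_roots, hgdeg]
    simpa using hF
  have hdvd : f ∣ (X ^ 2 ^ n - X : F[X]) := by
    obtain ⟨t, ht⟩ := hdn
    have h1 : ((X : F[X]) ^ (2 ^ d - 1)) - 1 ∣ (X ^ (2 ^ n - 1)) - 1 := by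
      have hnum : (2 : ℕ) ^ d - 1 ∣ 2 ^ n - 1 := by
        have := Nat.sub_dvd_pow_sub_pow (2 ^ d) 1 t
        simpa [← pow_mul, ← ht] using this
      obtain ⟨s, hs⟩ := hnum
      have : ((X : F[X]) ^ (2 ^ d - 1)) - 1 ∣ ((X : F[X]) ^ (2 ^ d - 1)) ^ s - 1 ^ s :=
        sub_dvd_pow_sub_pow _ _ s
      simpa [← pow_mul, ← hs] using this
    have hx : ∀ m : ℕ, m ≠ 0 → (X : F[X]) ^ m - X = X * (X ^ (m - 1) - 1) := by
      intro m hm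
      rw [mul_sub, mul_one, ← pow_succ', Nat.sub_add_cancel (Nat.one_le_iff_ne_zero.mpr hm)]
    rw [hf, hx _ (pow_ne_zero d two_ne_zero), hx _ (pow_ne_zero n two_ne_zero)]
    exact mul_dvd_mul_left _ h1
  have hsplits : f.Splits :=
    hg_splits.of_dvd hgne hdvd
  have hcardroots : Multiset.card f.roots = 2 ^ d := by
    have := hsplits.natDegree_eq_card_roots
    rw [← this, hdeg]
  have hnodup : f.roots.Nodup := nodup_roots hsep
  have hmem : ∀ u : F, (u ^ 2 ^ d = u) ↔ u ∈ f.roots.toFinset := by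
    intro u
    rw [Multiset.mem_toFinset, mem_roots hne]
    simp only [hf, IsRoot.def, eval_sub, eval_pow, eval_X, sub_eq_zero]
  rw [Nat.card_congr (Equiv.subtypeEquivRight hmem)]
  rw [Nat.card_eq_fintype_card, Fintype.card_coe,
    Multiset.toFinset_card_of_nodup hnodup, hcardroots]

/-- the number of triples (x,y,z) ∈ F_q³ with x+y+z = 0,
x^{2^k+1}+y^{2^k+1}+z^{2^k+1} = 0 and x^{2^{2k}+1}+y^{2^{2k}+1}+z^{2^{2k}+1} = 0
equals 2^{n+d} + 2^n - 2^d, where q = 2^n and d = gcd(n,k). -/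
theorem stmt_0 (n k : ℕ) (hn : 0 < n) (hk : 0 < k) (d : ℕ) (hd : d = Nat.gcd n k) :
    {t : GaloisField 2 n × GaloisField 2 n × GaloisField 2 n |
        t.1 + t.2.1 + t.2.2 = 0 ∧
        t.1 ^ (2 ^ k + 1) + t.2.1 ^ (2 ^ k + 1) + t.2.2 ^ (2 ^ k + 1) = 0 ∧
        t.1 ^ (2 ^ (2 * k) + 1) + t.2.1 ^ (2 ^ (2 * k) + 1) + t.2.2 ^ (2 ^ (2 * k) + 1) = 0}.ncard
      = 2 ^ (n + d) + 2 ^ n - 2 ^ d := by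
  classical
  set F := GaloisField 2 n with hFdef
  haveI : Fintype F := Fintype.ofFinite F
  have hF : Fintype.card F = 2 ^ n := by
    have := GaloisField.card 2 n hn.ne'
    rwa [Nat.card_eq_fintype_card] at this
  have h2 : (2 : F) = 0 := CharTwo.two_eq_zero
  have hd0 : d ≠ 0 := by
    rw [hd]
    exact (Nat.gcd_pos_of_pos_left k hn).ne'
  have hdn : d ∣ n := hd ▸ Nat.gcd_dvd_left n k
  have hdk : d ∣ k := hd ▸ Nat.gcd_dvd_right n k
  -- transform condition for nonzero x
  have key : ∀ (m : ℕ) (x y : F), x ≠ 0 →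
      ((x ^ 2 ^ m * y = x * y ^ 2 ^ m) ↔ (y / x) ^ 2 ^ m = y / x) := by
    intro m x y hx
    rw [div_pow, div_eq_div_iff (pow_ne_zero _ hx) hx]
    constructor <;> intro h <;> linear_combination -h
  have pairs : ∀ x y : F,
      ((x ^ 2 ^ k * y = x * y ^ 2 ^ k) ∧ (x ^ 2 ^ (2 * k) * y = x * y ^ 2 ^ (2 * k))) ↔
        x ^ 2 ^ d * y = x * y ^ 2 ^ d := by
    intro x y
    rcases eq_or_ne x 0 with rfl | hx
    · simp [zero_pow (pow_ne_zero _ (two_ne_zero))]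
    · rw [key k x y hx, key (2 * k) x y hx, key d x y hx]
      constructor
      · rintro ⟨h1, -⟩
        have hun : (y / x) ^ 2 ^ n = y / x := by
          have := FiniteField.pow_card (y / x)
          rwa [hF] at this
        have := fix_gcd n k (y / x) hun h1
        rwa [← hd] at this
      · intro h
        obtain ⟨t, ht⟩ := hdk
        refine ⟨?_, ?_⟩
        · rw [ht]; exact fix_mul _ h t
        · have h2k : 2 * k = d * (2 * t) := by rw [ht]; ring
          rw [h2k]; exact fix_mul _ h (2 * t)
  have hmem : ∀ x y z : F,
      ((x + y + z = 0) ∧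
        (x ^ (2 ^ k + 1) + y ^ (2 ^ k + 1) + z ^ (2 ^ k + 1) = 0) ∧
        (x ^ (2 ^ (2 * k) + 1) + y ^ (2 ^ (2 * k) + 1) + z ^ (2 ^ (2 * k) + 1) = 0)) ↔
      (z = x + y ∧ x ^ 2 ^ d * y = x * y ^ 2 ^ d) := by
    intro x y z
    constructor
    · rintro ⟨h0, hc1, hc2⟩
      have hz : z = x + y := by linear_combination h0 - (x + y) * h2
      subst hz
      rw [expand_cond] at hc1 hc2
      refine ⟨rfl, (pairs x y).mp ⟨?_, ?_⟩⟩
      · linear_combination hc1 - (x * y ^ 2 ^ k) * h2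
      · linear_combination hc2 - (x * y ^ 2 ^ (2 * k)) * h2
    · rintro ⟨hz, hq⟩
      subst hz
      obtain ⟨hq1, hq2⟩ := (pairs x y).mpr hq
      refine ⟨by linear_combination (x + y) * h2, ?_, ?_⟩
      · rw [expand_cond]; linear_combination hq1 + (x * y ^ 2 ^ k) * h2
      · rw [expand_cond]; linear_combination hq2 + (x * y ^ 2 ^ (2 * k)) * h2
  -- rewrite the set as an image
  have hinj : Function.Injective (fun p : F × F => (p.1, p.2, p.1 + p.2)) := by
    intro p q h
    simp only [Prod.mk.injEq] at h
    exact Prod.ext h.1 h.2.1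
  have hset : {t : F × F × F |
        t.1 + t.2.1 + t.2.2 = 0 ∧
        t.1 ^ (2 ^ k + 1) + t.2.1 ^ (2 ^ k + 1) + t.2.2 ^ (2 ^ k + 1) = 0 ∧
        t.1 ^ (2 ^ (2 * k) + 1) + t.2.1 ^ (2 ^ (2 * k) + 1) + t.2.2 ^ (2 ^ (2 * k) + 1) = 0}
      = (fun p : F × F => (p.1, p.2, p.1 + p.2)) ''
          {p : F × F | p.1 ^ 2 ^ d * p.2 = p.1 * p.2 ^ 2 ^ d} := by
    ext ⟨x, y, z⟩
    constructor
    · intro h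
      obtain ⟨hz, hq⟩ := (hmem x y z).mp h
      exact ⟨(x, y), hq, by simp [hz]⟩
    · rintro ⟨⟨a, b⟩, hq, heq⟩
      simp only [Prod.mk.injEq] at heq
      obtain ⟨rfl, rfl, rfl⟩ := heq
      exact (hmem a b (a + b)).mpr ⟨rfl, hq⟩
  rw [hset, Set.ncard_image_of_injective _ hinj, ← Nat.card_coe_set_eq]
  have hcongr : Nat.card ↑{p : F × F | p.1 ^ 2 ^ d * p.2 = p.1 * p.2 ^ 2 ^ d}
      = Nat.card ((a : F) × {b : F // a ^ 2 ^ d * b = a * b ^ 2 ^ d}) :=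
    Nat.card_congr (Equiv.subtypeProdEquivSigmaSubtype (fun a b : F => a ^ 2 ^ d * b = a * b ^ 2 ^ d))
  rw [hcongr, Nat.card_eq_fintype_card, Fintype.card_sigma]
  have hle : 2 ^ d ≤ 2 ^ n := Nat.pow_le_pow_right (by norm_num) (Nat.le_of_dvd hn hdn)
  have hfib : ∀ x : F, Fintype.card {b : F // x ^ 2 ^ d * b = x * b ^ 2 ^ d}
      = if x = 0 then 2 ^ n else 2 ^ d := by
    intro x
    rw [← Nat.card_eq_fintype_card]
    split_ifs with hx
    · subst hx
      have htriv : ∀ b : F, ((0 : F) ^ 2 ^ d * b = 0 * b ^ 2 ^ d) ↔ True := by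
        intro b
        simp [zero_pow (pow_ne_zero _ (two_ne_zero))]
      rw [Nat.card_congr (Equiv.subtypeEquivRight htriv),
        Nat.card_congr (Equiv.subtypeUnivEquiv fun _ => trivial),
        Nat.card_eq_fintype_card, hF]
    · have e : {u : F // u ^ 2 ^ d = u} ≃ {b : F // x ^ 2 ^ d * b = x * b ^ 2 ^ d} :=
        (Equiv.mulLeft₀ x hx).subtypeEquiv (by
          intro u
          show u ^ 2 ^ d = u ↔ x ^ 2 ^ d * (x * u) = x * (x * u) ^ 2 ^ d
          rw [mul_pow]
          constructor
          · intro hu; rw [hu]; ring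
          · intro hq2
            have h' := mul_left_cancel₀ (mul_ne_zero (pow_ne_zero _ hx) hx)
              (show (x ^ 2 ^ d * x) * u = (x ^ 2 ^ d * x) * u ^ 2 ^ d by linear_combination hq2)
            exact h'.symm)
      rw [← Nat.card_congr e, card_fix hF hn.ne' hd0 hdn]
  calc (∑ x : F, Fintype.card {b : F // x ^ 2 ^ d * b = x * b ^ 2 ^ d})
      = ∑ x : F, ((if x = 0 then 2 ^ n - 2 ^ d else 0) + 2 ^ d) := by
        refine Finset.sum_congr rfl fun x _ => ?_
        rw [hfib x]
        split_ifs <;> omega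
    _ = 2 ^ (n + d) + 2 ^ n - 2 ^ d := by
        rw [Finset.sum_add_distrib, Finset.sum_const, Finset.sum_ite_eq' Finset.univ (0 : F)
          (fun _ => 2 ^ n - 2 ^ d)]
        simp only [Finset.mem_univ, if_true, Finset.card_univ, hF, smul_eq_mul, pow_add]
        set c := 2 ^ n * 2 ^ d
        omega
end

section
/- Let q = 2^n, k a positive integer, d = gcd(n,k), and for α, β, γ ∈ F_q define S(α,β,γ) = Σ_{x ∈ F_q} (-1)^{Tr(α x^{2^{2k}+1} + β x^{2^k+1} + γ x)}, where Tr is the absolute trace from F_q to F_2. Then Σ_{α,β,γ ∈ F_q} S(α,β,γ)^3 = (2^{n+d} + 2^n - 2^d) · 2^{3n}. -/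
open Finset Polynomial
open scoped Classical

namespace Stmt1Aux

noncomputable abbrev Fq (n : ℕ) := GaloisField 2 n

noncomputable def chi (n : ℕ) (t : Fq n) : ℤ :=
  (-1) ^ (Algebra.trace (ZMod 2) (GaloisField 2 n) t).val

lemma chi_add {n : ℕ} (u v : Fq n) : chi n (u + v) = chi n u * chi n v := by
  unfold chi
  rw [map_add]
  have : ∀ a b : ZMod 2, ((-1 : ℤ)) ^ (a + b).val = (-1) ^ a.val * (-1) ^ b.val := by decide
  exact this _ _

lemma card_Fq {n : ℕ} [Fintype (Fq n)] (hn : n ≠ 0) : Fintype.card (Fq n) = 2 ^ n := by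
  have := GaloisField.card 2 n hn
  simpa [Nat.card_eq_fintype_card] using this

lemma char_sum {n : ℕ} [Fintype (Fq n)] (hn : n ≠ 0) (u : Fq n) :
    ∑ α : Fq n, chi n (α * u) = if u = 0 then (2 ^ n : ℤ) else 0 := by
  split_ifs with h
  · subst h
    have h1 : ∀ α : Fq n, chi n (α * 0) = 1 := by
      intro α; simp [chi]
    simp only [h1, Finset.sum_const, card_univ, card_Fq hn, nsmul_eq_mul, mul_one]
    push_cast; ring
  · obtain ⟨c, hc⟩ : ∃ c, Algebra.trace (ZMod 2) (GaloisField 2 n) (u * c) ≠ 0 := by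
      have hnd := (traceForm_nondegenerate (ZMod 2) (GaloisField 2 n)).1 u
      simp_rw [Algebra.traceForm_apply] at hnd
      by_contra! hf
      exact h (hnd hf)
    have hc1 : chi n (c * u) = -1 := by
      have h1 : Algebra.trace (ZMod 2) (GaloisField 2 n) (c * u) = 1 := by
        rw [mul_comm]
        have : ∀ a : ZMod 2, a ≠ 0 → a = 1 := by decide
        exact this _ hc
      simp only [chi, h1]
      decide
    have key : ∑ α : Fq n, chi n ((α + c) * u) = ∑ α : Fq n, chi n (α * u) :=
      Fintype.sum_equiv (Equiv.addRight c) _ _ (fun _ => rfl)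
    have flip : ∀ α : Fq n, chi n ((α + c) * u) = -chi n (α * u) := by
      intro α
      rw [add_mul, chi_add, hc1]; ring
    have h2 : ∑ α : Fq n, chi n (α * u) = -∑ α : Fq n, chi n (α * u) := by
      conv_lhs => rw [← key]
      rw [Finset.sum_congr rfl (fun α _ => flip α), Finset.sum_neg_distrib]
    linarith

lemma sum_mul3 {ι : Type*} [Fintype ι] (f g h : ι → ℤ) :
    (∑ a : ι, f a) * (∑ b : ι, g b) * (∑ c : ι, h c)
      = ∑ a : ι, ∑ b : ι, ∑ c : ι, f a * g b * h c := by
  rw [Finset.sum_mul_sum, Finset.sum_mul]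
  refine Finset.sum_congr rfl fun a _ => ?_
  rw [Finset.sum_mul]
  refine Finset.sum_congr rfl fun b _ => ?_
  rw [Finset.mul_sum]

lemma cube {ι : Type*} [Fintype ι] (f : ι → ℤ) :
    (∑ x : ι, f x) ^ 3 = ∑ x : ι, ∑ y : ι, ∑ z : ι, f x * f y * f z := by
  rw [← sum_mul3]; ring

lemma sum3 {ι : Type*} [Fintype ι] (g : ι → ι → ι → ℤ) :
    ∑ v : ι × ι × ι, g v.1 v.2.1 v.2.2 = ∑ a : ι, ∑ b : ι, ∑ c : ι, g a b c := by
  rw [Fintype.sum_prod_type]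
  exact Finset.sum_congr rfl fun a _ => Fintype.sum_prod_type _

lemma swap6 {ι : Type*} [Fintype ι] (f : ι → ι → ι → ι → ι → ι → ℤ) :
    (∑ α : ι, ∑ β : ι, ∑ γ : ι, ∑ x : ι, ∑ y : ι, ∑ z : ι, f α β γ x y z)
      = ∑ x : ι, ∑ y : ι, ∑ z : ι, ∑ α : ι, ∑ β : ι, ∑ γ : ι, f α β γ x y z := by
  have e1 : (∑ v : ι × ι × ι, ∑ w : ι × ι × ι,
      f v.1 v.2.1 v.2.2 w.1 w.2.1 w.2.2)
      = ∑ α : ι, ∑ β : ι, ∑ γ : ι, ∑ x : ι, ∑ y : ι, ∑ z : ι, f α β γ x y z := by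
    refine Eq.trans (sum3 (fun a b c => ∑ w : ι × ι × ι, f a b c w.1 w.2.1 w.2.2)) ?_
    refine Finset.sum_congr rfl fun a _ => Finset.sum_congr rfl fun b _ =>
      Finset.sum_congr rfl fun c _ => sum3 _
  have e2 : (∑ w : ι × ι × ι, ∑ v : ι × ι × ι,
      f v.1 v.2.1 v.2.2 w.1 w.2.1 w.2.2)
      = ∑ x : ι, ∑ y : ι, ∑ z : ι, ∑ α : ι, ∑ β : ι, ∑ γ : ι, f α β γ x y z := by
    refine Eq.trans (sum3 (fun x y z => ∑ v : ι × ι × ι, f v.1 v.2.1 v.2.2 x y z)) ?_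
    refine Finset.sum_congr rfl fun a _ => Finset.sum_congr rfl fun b _ =>
      Finset.sum_congr rfl fun c _ => sum3 (fun α β γ => f α β γ a b c)
  rw [← e1, ← e2, Finset.sum_comm]


lemma triple {n : ℕ} [Fintype (Fq n)] (hn : n ≠ 0) (A B C : Fq n) :
    (∑ α : Fq n, ∑ β : Fq n, ∑ γ : Fq n, chi n (α * A) * chi n (β * B) * chi n (γ * C))
      = (if A = 0 then (2 ^ n : ℤ) else 0) * (if B = 0 then (2 ^ n : ℤ) else 0)
        * (if C = 0 then (2 ^ n : ℤ) else 0) := by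
  rw [← sum_mul3, char_sum hn, char_sum hn, char_sum hn]

lemma expand_m {n : ℕ} (m : ℕ) (x y : Fq n) :
    x ^ (2 ^ m + 1) + y ^ (2 ^ m + 1) + (x + y) ^ (2 ^ m + 1)
      = x ^ 2 ^ m * y + x * y ^ 2 ^ m := by
  have h2 : (2 : Fq n) = 0 := CharTwo.two_eq_zero
  rw [pow_succ, pow_succ, pow_succ, add_pow_char_pow]
  linear_combination (x ^ 2 ^ m * x + y ^ 2 ^ m * y) * h2

lemma pow22k {n : ℕ} (x : Fq n) (k : ℕ) : (x ^ 2 ^ k) ^ 2 ^ k = x ^ 2 ^ (2 * k) := by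
  rw [← pow_mul, ← pow_add, two_mul]

lemma cond_step {n k : ℕ} {x y : Fq n} (h : x ^ 2 ^ k * y = x * y ^ 2 ^ k) :
    x ^ 2 ^ (2 * k) * y = x * y ^ 2 ^ (2 * k) := by
  by_cases hx : x = 0
  · subst hx; simp [zero_pow (Nat.two_pow_pos _).ne']
  by_cases hy : y = 0
  · subst hy; simp [zero_pow (Nat.two_pow_pos _).ne']
  have h2 : x ^ 2 ^ (2 * k) * y ^ 2 ^ k = x ^ 2 ^ k * y ^ 2 ^ (2 * k) := by
    have := congrArg (· ^ 2 ^ k) h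
    simpa only [mul_pow, pow22k] using this
  have hy' : y ^ 2 ^ k ≠ 0 := pow_ne_zero _ hy
  apply mul_right_cancel₀ hy'
  calc x ^ 2 ^ (2 * k) * y * y ^ 2 ^ k = x ^ 2 ^ (2 * k) * y ^ 2 ^ k * y := by ring
    _ = x ^ 2 ^ k * y ^ 2 ^ (2 * k) * y := by rw [h2]
    _ = x ^ 2 ^ k * y * y ^ 2 ^ (2 * k) := by ring
    _ = x * y ^ 2 ^ k * y ^ 2 ^ (2 * k) := by rw [h]
    _ = x * y ^ 2 ^ (2 * k) * y ^ 2 ^ k := by ring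

lemma cond_iff {n : ℕ} (k : ℕ) (x y z : Fq n) :
    (x ^ (2 ^ (2 * k) + 1) + y ^ (2 ^ (2 * k) + 1) + z ^ (2 ^ (2 * k) + 1) = 0
      ∧ x ^ (2 ^ k + 1) + y ^ (2 ^ k + 1) + z ^ (2 ^ k + 1) = 0
      ∧ x + y + z = 0)
    ↔ (z = x + y ∧ x ^ 2 ^ k * y = x * y ^ 2 ^ k) := by
  constructor
  · rintro ⟨hA, hB, hC⟩
    have hz : z = x + y := by
      rw [add_eq_zero_iff_eq_neg, CharTwo.neg_eq, eq_comm] at hC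
      exact hC
    subst hz
    refine ⟨rfl, ?_⟩
    have h0 : x ^ 2 ^ k * y + x * y ^ 2 ^ k = 0 := (expand_m k x y).symm.trans hB
    rwa [add_eq_zero_iff_eq_neg, CharTwo.neg_eq] at h0
  · rintro ⟨rfl, hcond⟩
    refine ⟨?_, ?_, ?_⟩
    · rw [expand_m (2 * k) x y, add_eq_zero_iff_eq_neg, CharTwo.neg_eq]
      exact cond_step hcond
    · rw [expand_m k x y, add_eq_zero_iff_eq_neg, CharTwo.neg_eq]
      exact hcond
    · rw [add_eq_zero_iff_eq_neg, CharTwo.neg_eq]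

lemma pow_pow_mul {n : ℕ} (t : Fq n) (a j : ℕ) (h : t ^ 2 ^ a = t) : t ^ 2 ^ (a * j) = t := by
  induction j with
  | zero => simp
  | succ j ih =>
    have : 2 ^ (a * (j + 1)) = 2 ^ (a * j) * 2 ^ a := by rw [← pow_add, Nat.mul_succ]
    rw [this, pow_mul, ih, h]

lemma pow_gcd_fix {n : ℕ} (t : Fq n) (a b : ℕ) (ha : t ^ 2 ^ a = t) (hb : t ^ 2 ^ b = t) :
    t ^ 2 ^ Nat.gcd a b = t := by
  induction a, b using Nat.gcd.induction with
  | H0 b => simpa using hb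
  | H1 a b hpos ih =>
    rw [Nat.gcd_rec]
    refine ih ?_ ha
    have hdm : a * (b / a) + b % a = b := Nat.div_add_mod b a
    have h1 : t ^ 2 ^ (a * (b / a)) = t := pow_pow_mul t a (b / a) ha
    calc t ^ 2 ^ (b % a) = (t ^ 2 ^ (a * (b / a))) ^ 2 ^ (b % a) := by rw [h1]
      _ = t ^ 2 ^ (a * (b / a) + b % a) := by rw [← pow_mul, ← pow_add]
      _ = t := by rw [hdm, hb]


lemma dvd_aux {n : ℕ} (d j : ℕ) :
    ((X : (Fq n)[X]) ^ 2 ^ d - X) ∣ (X ^ 2 ^ (d * j) - X) := by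
  induction j with
  | zero => simp
  | succ j ih =>
    have key : (X : (Fq n)[X]) ^ 2 ^ (d * (j + 1)) - X
        = ((X ^ 2 ^ (d * j) - X) ^ 2 ^ d) + (X ^ 2 ^ d - X) := by
      rw [sub_pow_char_pow (p := 2), ← pow_mul, ← pow_add]
      rw [show d * j + d = d * (j + 1) from by ring]
      ring
    rw [key]
    exact dvd_add (dvd_pow ih (Nat.two_pow_pos d).ne') dvd_rfl

lemma count_pow {n : ℕ} [Fintype (Fq n)] (hn : n ≠ 0) (d : ℕ) (hd0 : d ≠ 0) (hdn : d ∣ n) :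
    (univ.filter fun x : Fq n => x ^ 2 ^ d = x).card = 2 ^ d := by
  obtain ⟨m, hm⟩ := hdn
  set f : (Fq n)[X] := X ^ 2 ^ d - X with hf
  have hf0 : f ≠ 0 := FiniteField.X_pow_card_pow_sub_X_ne_zero _ hd0 one_lt_two
  have hg0 : (X ^ 2 ^ n - X : (Fq n)[X]) ≠ 0 :=
    FiniteField.X_pow_card_pow_sub_X_ne_zero _ hn one_lt_two
  have hgroots : (X ^ 2 ^ n - X : (Fq n)[X]).roots = Finset.univ.val := by
    have := FiniteField.roots_X_pow_card_sub_X (Fq n)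
    rwa [card_Fq hn] at this
  have hgdeg : (X ^ 2 ^ n - X : (Fq n)[X]).natDegree = 2 ^ n :=
    FiniteField.X_pow_card_pow_sub_X_natDegree_eq _ hn one_lt_two
  have hgsplits : Splits (X ^ 2 ^ n - X : (Fq n)[X]) := by
    refine (splits_iff_card_roots).mpr ?_
    rw [hgroots, hgdeg]
    change Finset.univ.card = _
    rw [Finset.card_univ, card_Fq hn]
  have hdvd : f ∣ X ^ 2 ^ n - X := by
    have h := dvd_aux (n := n) d m
    rwa [← hm] at h
  have hfsplits : Splits f :=
    hgsplits.of_dvd hg0 hdvd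
  have hfdeg : f.natDegree = 2 ^ d :=
    FiniteField.X_pow_card_pow_sub_X_natDegree_eq _ hd0 one_lt_two
  have hfroots : Multiset.card f.roots = 2 ^ d := by
    have := (splits_iff_card_roots).mp hfsplits
    rwa [hfdeg] at this
  have hnodup : f.roots.Nodup :=
    nodup_roots (galois_poly_separable 2 (2 ^ d) (dvd_pow_self 2 hd0))
  have hset : (univ.filter fun x : Fq n => x ^ 2 ^ d = x) = f.roots.toFinset := by
    ext x
    simp only [mem_filter, mem_univ, true_and, Multiset.mem_toFinset, mem_roots (hf ▸ hf0 : (X ^ 2 ^ d - X : (Fq n)[X]) ≠ 0),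
      IsRoot.def, hf, eval_sub, eval_pow, eval_X, sub_eq_zero]
  rw [hset, Multiset.toFinset_card_of_nodup hnodup, hfroots]

lemma countT {n k : ℕ} [Fintype (Fq n)] (hn : n ≠ 0) (hk : k ≠ 0) :
    (univ.filter fun t : Fq n => t ^ 2 ^ k = t).card = 2 ^ Nat.gcd n k := by
  have hd0 : Nat.gcd n k ≠ 0 := Nat.gcd_ne_zero_left hn
  have hdk : Nat.gcd n k ∣ k := Nat.gcd_dvd_right n k
  have hfix : ∀ t : Fq n, t ^ 2 ^ k = t ↔ t ^ 2 ^ Nat.gcd n k = t := by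
    intro t
    constructor
    · intro h
      have hcard : t ^ 2 ^ n = t := by
        have := FiniteField.pow_card t
        rwa [card_Fq hn] at this
      exact pow_gcd_fix t n k hcard h
    · intro h
      obtain ⟨j, hj⟩ := hdk
      rw [hj]
      exact pow_pow_mul t _ j h
  rw [show (univ.filter fun t : Fq n => t ^ 2 ^ k = t)
      = (univ.filter fun t : Fq n => t ^ 2 ^ Nat.gcd n k = t) from by
    ext t; simp [hfix t]]
  exact count_pow hn _ hd0 (Nat.gcd_dvd_left n k)


lemma countN {n k : ℕ} [Fintype (Fq n)] (hn : n ≠ 0) (hk : k ≠ 0) :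
    (∑ x : Fq n, ∑ y : Fq n, (if x ^ 2 ^ k * y = x * y ^ 2 ^ k then (1 : ℤ) else 0))
      = 2 ^ n + (2 ^ n - 1) * 2 ^ Nat.gcd n k := by
  have g0 : (∑ y : Fq n, (if (0 : Fq n) ^ 2 ^ k * y = 0 * y ^ 2 ^ k then (1 : ℤ) else 0))
      = 2 ^ n := by
    have h1 : ∀ y : Fq n, (if (0 : Fq n) ^ 2 ^ k * y = 0 * y ^ 2 ^ k then (1 : ℤ) else 0) = 1 := by
      intro y
      rw [if_pos]
      rw [zero_pow (Nat.two_pow_pos k).ne', zero_mul, zero_mul]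
    rw [Finset.sum_congr rfl (fun y _ => h1 y), Finset.sum_const, Finset.card_univ,
      card_Fq hn, nsmul_eq_mul, mul_one]
    push_cast; ring
  have gx : ∀ x : Fq n, x ≠ 0 →
      (∑ y : Fq n, (if x ^ 2 ^ k * y = x * y ^ 2 ^ k then (1 : ℤ) else 0))
        = 2 ^ Nat.gcd n k := by
    intro x hx
    have hre : (∑ t : Fq n, (if t ^ 2 ^ k = t then (1 : ℤ) else 0))
        = ∑ y : Fq n, (if x ^ 2 ^ k * y = x * y ^ 2 ^ k then (1 : ℤ) else 0) := by
      refine Fintype.sum_equiv (Equiv.mulRight₀ x hx) _ _ (fun t => ?_)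
      have happ : (Equiv.mulRight₀ x hx) t = t * x := rfl
      rw [happ]
      have hiff : t ^ 2 ^ k = t ↔ x ^ 2 ^ k * (t * x) = x * (t * x) ^ 2 ^ k := by
        rw [mul_pow]
        constructor
        · intro h
          linear_combination (-(x ^ 2 ^ k * x)) * h
        · intro h
          have hxx : x ^ 2 ^ k * x ≠ 0 := mul_ne_zero (pow_ne_zero _ hx) hx
          apply mul_left_cancel₀ hxx
          linear_combination -h
      exact if_congr hiff rfl rfl
    rw [← hre, Finset.sum_boole, countT hn hk]
    push_cast; ring
  rw [← Finset.add_sum_erase univ _ (mem_univ (0 : Fq n))]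
  rw [g0, Finset.sum_congr rfl (fun x hx => gx x (Finset.ne_of_mem_erase hx)),
    Finset.sum_const, Finset.card_erase_of_mem (mem_univ 0), Finset.card_univ, card_Fq hn,
    nsmul_eq_mul]
  have hcast : ((2 ^ n - 1 : ℕ) : ℤ) = 2 ^ n - 1 := by
    push_cast [Nat.one_le_two_pow]
    ring
  rw [hcast]

lemma combine {n : ℕ} (k : ℕ) (α β γ x y z : Fq n) :
    chi n (α * x ^ (2 ^ (2 * k) + 1) + β * x ^ (2 ^ k + 1) + γ * x)
      * chi n (α * y ^ (2 ^ (2 * k) + 1) + β * y ^ (2 ^ k + 1) + γ * y)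
      * chi n (α * z ^ (2 ^ (2 * k) + 1) + β * z ^ (2 ^ k + 1) + γ * z)
    = chi n (α * (x ^ (2 ^ (2 * k) + 1) + y ^ (2 ^ (2 * k) + 1) + z ^ (2 ^ (2 * k) + 1)))
      * chi n (β * (x ^ (2 ^ k + 1) + y ^ (2 ^ k + 1) + z ^ (2 ^ k + 1)))
      * chi n (γ * (x + y + z)) := by
  simp only [mul_add, chi_add]
  ring

lemma zsum {n : ℕ} (k : ℕ) [Fintype (Fq n)] (x y : Fq n) (Q : ℤ) :
    (∑ z : Fq n,
      (if x ^ (2 ^ (2 * k) + 1) + y ^ (2 ^ (2 * k) + 1) + z ^ (2 ^ (2 * k) + 1) = 0 then Q else 0)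
      * (if x ^ (2 ^ k + 1) + y ^ (2 ^ k + 1) + z ^ (2 ^ k + 1) = 0 then Q else 0)
      * (if x + y + z = 0 then Q else 0))
    = (if x ^ 2 ^ k * y = x * y ^ 2 ^ k then Q ^ 3 else 0) := by
  have hpt : ∀ z : Fq n,
      (if x ^ (2 ^ (2 * k) + 1) + y ^ (2 ^ (2 * k) + 1) + z ^ (2 ^ (2 * k) + 1) = 0 then Q else 0)
      * (if x ^ (2 ^ k + 1) + y ^ (2 ^ k + 1) + z ^ (2 ^ k + 1) = 0 then Q else 0)
      * (if x + y + z = 0 then Q else 0)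
      = if z = x + y then (if x ^ 2 ^ k * y = x * y ^ 2 ^ k then Q ^ 3 else 0) else 0 := by
    intro z
    by_cases hzc : z = x + y ∧ x ^ 2 ^ k * y = x * y ^ 2 ^ k
    · obtain ⟨hA, hB, hC⟩ := (cond_iff k x y z).mpr hzc
      rw [if_pos hA, if_pos hB, if_pos hC, if_pos hzc.1, if_pos hzc.2]
      ring
    · have hne : ¬(x ^ (2 ^ (2 * k) + 1) + y ^ (2 ^ (2 * k) + 1) + z ^ (2 ^ (2 * k) + 1) = 0
          ∧ x ^ (2 ^ k + 1) + y ^ (2 ^ k + 1) + z ^ (2 ^ k + 1) = 0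
          ∧ x + y + z = 0) := fun h => hzc ((cond_iff k x y z).mp h)
      have hrhs : (if z = x + y then (if x ^ 2 ^ k * y = x * y ^ 2 ^ k then Q ^ 3 else 0) else 0)
          = 0 := by
        by_cases h1 : z = x + y
        · rw [if_pos h1, if_neg (fun h2 => hzc ⟨h1, h2⟩)]
        · rw [if_neg h1]
      rw [hrhs]
      rcases not_and_or.mp hne with h | h
      · rw [if_neg h]; ring
      · rcases not_and_or.mp h with h | h
        · rw [if_neg h]; ring
        · rw [if_neg h]; ring
  rw [Finset.sum_congr rfl (fun z _ => hpt z)]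
  exact Fintype.sum_ite_eq' (x + y) _

lemma ite_factor (c : ℤ) (p : Prop) [Decidable p] : (if p then c else 0) = c * (if p then 1 else 0) := by
  split_ifs <;> ring

end Stmt1Aux

open Stmt1Aux

/-- the third power moment identity
∑_{α,β,γ ∈ F_q} S(α,β,γ)³ = (2^{n+d} + 2^n - 2^d)·2^{3n}. -/
theorem stmt_1 (n k : ℕ) (hn : 0 < n) (hk : 0 < k) (d : ℕ) (hd : d = Nat.gcd n k)
    [Fintype (GaloisField 2 n)]
    (S : GaloisField 2 n → GaloisField 2 n → GaloisField 2 n → ℤ)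
    (hS : ∀ α β γ : GaloisField 2 n, S α β γ = ∑ x : GaloisField 2 n,
      (-1 : ℤ) ^ (Algebra.trace (ZMod 2) (GaloisField 2 n)
        (α * x ^ (2 ^ (2 * k) + 1) + β * x ^ (2 ^ k + 1) + γ * x)).val) :
    ∑ α : GaloisField 2 n, ∑ β : GaloisField 2 n, ∑ γ : GaloisField 2 n, (S α β γ) ^ 3
      = (2 ^ (n + d) + 2 ^ n - 2 ^ d) * 2 ^ (3 * n) := by
  have hn0 : n ≠ 0 := hn.ne'
  have hk0 : k ≠ 0 := hk.ne'
  subst hd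
  have hchi : ∀ t : GaloisField 2 n,
      ((-1 : ℤ) ^ (Algebra.trace (ZMod 2) (GaloisField 2 n) t).val) = chi n t := fun _ => rfl
  simp only [hS, hchi, cube, combine]
  rw [swap6]
  simp only [triple hn0]
  simp only [zsum]
  simp only [ite_factor (((2:ℤ)^n)^3)]
  simp only [← Finset.mul_sum]
  rw [countN hn0 hk0]
  rw [show (2:ℤ)^(3*n) = ((2:ℤ)^n)^3 from by rw [← pow_mul, Nat.mul_comm], pow_add]
  ring
end

section
/- Let q = 2^n, k a positive integer, d = gcd(n,k). The set of x ∈ F_q with x^{2^{2k}+1} + (x+1)^{2^{2k}+1} + 1 = 0 and x^{2^k+1} + (x+1)^{2^k+1} + 1 = 0 is exactly the subfield F_{2^d} ⊆ F_q; in particular the number of x ∈ F_q \ {0,1} satisfying both equations is 2^d - 2. -/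
open Polynomial

lemma iter_fix {M : Type*} [Monoid M] (x : M) (a : ℕ) (h : x ^ (2^a) = x) :
    ∀ m, x ^ (2 ^ (a * m)) = x := by
  intro m
  induction m with
  | zero => simp
  | succ m ih =>
    have : 2 ^ (a * (m+1)) = 2 ^ (a*m) * 2 ^ a := by rw [← pow_add, Nat.mul_succ]
    rw [this, pow_mul, ih, h]

lemma gcd_fix {M : Type*} [Monoid M] (x : M) :
    ∀ n, ∀ k, x ^ (2^n) = x → x ^ (2^k) = x → x ^ (2 ^ Nat.gcd n k) = x := by
  intro n
  induction n using Nat.strong_induction_on with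
  | _ n ih =>
    intro kk hn hk
    rcases Nat.eq_zero_or_pos n with h0 | hpos
    · subst h0; simpa using hk
    · rw [Nat.gcd_rec n kk]
      refine ih (kk % n) (Nat.mod_lt _ hpos) n ?_ hn
      calc x ^ (2 ^ (kk % n)) = (x ^ (2 ^ (n * (kk / n)))) ^ (2 ^ (kk % n)) := by
            rw [iter_fix x n hn]
        _ = x ^ (2 ^ (n * (kk / n)) * 2 ^ (kk % n)) := (pow_mul ..).symm
        _ = x ^ (2 ^ (n * (kk / n) + kk % n)) := by rw [pow_add]
        _ = x ^ (2 ^ kk) := by rw [Nat.div_add_mod]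
        _ = x := hk

lemma eq_simp {K : Type*} [Field K] [CharP K 2] (x : K) (m : ℕ) :
    x ^ (2^m + 1) + (x + 1) ^ (2^m + 1) + 1 = x ^ (2^m) + x := by
  have h2 : (2 : K) = 0 := CharTwo.two_eq_zero
  rw [pow_succ x, pow_succ (x+1), add_pow_char_pow, one_pow]
  linear_combination (x ^ (2^m) * x + 1) * h2


lemma count_fix (n d : ℕ) (hn : 0 < n) (hd0 : d ≠ 0) (hdn : d ∣ n) :
    {x : GaloisField 2 n | x ^ (2 ^ d) = x}.ncard = 2 ^ d := by
  classical
  set K := GaloisField 2 n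
  haveI : Fintype K := Fintype.ofFinite _
  have hcard : Fintype.card K = 2 ^ n := by
    rw [← Nat.card_eq_fintype_card]; exact GaloisField.card 2 n hn.ne'
  set f : K[X] := X ^ (2 ^ d) - X with hf
  set g : K[X] := X ^ (2 ^ n) - X with hg
  have hg0 : g ≠ 0 := by
    have := FiniteField.X_pow_card_sub_X_ne_zero K (Nat.one_lt_two_pow hn.ne')
    simpa [hg] using this
  have hgroots : g.roots = Finset.univ.val := by
    have := FiniteField.roots_X_pow_card_sub_X K
    rwa [hcard] at this
  have hgsplits : Splits g := by
    rw [splits_iff_card_roots, hgroots]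
    have : (Finset.univ.val : Multiset K).card = Fintype.card K := rfl
    rw [this, hcard]
    exact (FiniteField.X_pow_card_sub_X_natDegree_eq K (Nat.one_lt_two_pow hn.ne')).symm
  -- f divides g
  obtain ⟨m, hm⟩ := hdn
  have hdvd1 : 2 ^ d - 1 ∣ 2 ^ n - 1 := by
    have := Nat.sub_dvd_pow_sub_pow (2 ^ d) 1 m
    simpa [← pow_mul, ← hm] using this
  obtain ⟨t, ht⟩ := hdvd1
  have hXdvd : (X : K[X]) ^ (2 ^ d - 1) - 1 ∣ X ^ (2 ^ n - 1) - 1 := by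
    have := sub_dvd_pow_sub_pow ((X : K[X]) ^ (2 ^ d - 1)) 1 t
    simpa [← pow_mul, ← ht] using this
  have hfact : ∀ a : ℕ, a ≠ 0 → (X : K[X]) ^ a - X = X * (X ^ (a - 1) - 1) := by
    intro a ha
    rw [mul_sub, mul_one, ← pow_succ', Nat.sub_add_cancel (Nat.one_le_iff_ne_zero.mpr ha)]
  have hfg : f ∣ g := by
    rw [hf, hg, hfact _ (pow_ne_zero d two_ne_zero), hfact _ (pow_ne_zero n two_ne_zero)]
    exact mul_dvd_mul_left _ hXdvd
  have hf0 : f ≠ 0 := by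
    have := FiniteField.X_pow_card_sub_X_ne_zero K (Nat.one_lt_two_pow hd0)
    simpa [hf] using this
  have hfsep : f.Separable := galois_poly_separable 2 (2 ^ d) (dvd_pow_self 2 hd0)
  have hfsplits : Splits f := Splits.of_dvd hgsplits hg0 hfg
  have hfdeg : f.natDegree = 2 ^ d :=
    FiniteField.X_pow_card_sub_X_natDegree_eq K (Nat.one_lt_two_pow hd0)
  have hfroots : f.roots.card = 2 ^ d := by
    rw [splits_iff_card_roots] at hfsplits
    rw [hfsplits, hfdeg]
  have hset : {x : K | x ^ (2 ^ d) = x} = ↑f.roots.toFinset := by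
    ext x
    simp only [Set.mem_setOf_eq, Finset.coe_sort_coe, Multiset.mem_toFinset, Finset.mem_coe,
      mem_roots (p := X ^ 2 ^ d - X) hf0, IsRoot.def, hf, eval_sub, eval_pow, eval_X, sub_eq_zero]
  rw [hset, Set.ncard_coe_finset, Multiset.toFinset_card_of_nodup (f.nodup_roots hfsep), hfroots]

lemma count_fix' (n d : ℕ) (hn : 0 < n) (hd0 : d ≠ 0) (hdn : d ∣ n) :
    {x : GaloisField 2 n | x ^ (2 ^ d) = x ∧ x ≠ 0 ∧ x ≠ 1}.ncard = 2 ^ d - 2 := by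
  classical
  set K := GaloisField 2 n
  haveI : Fintype K := Fintype.ofFinite _
  have hcard : Fintype.card K = 2 ^ n := by
    rw [← Nat.card_eq_fintype_card]; exact GaloisField.card 2 n hn.ne'
  set f : K[X] := X ^ (2 ^ d) - X with hf
  set g : K[X] := X ^ (2 ^ n) - X with hg
  have hg0 : g ≠ 0 := by
    have := FiniteField.X_pow_card_sub_X_ne_zero K (Nat.one_lt_two_pow hn.ne')
    simpa [hg] using this
  have hgroots : g.roots = Finset.univ.val := by
    have := FiniteField.roots_X_pow_card_sub_X K
    rwa [hcard] at this
  have hgsplits : Splits g := by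
    rw [splits_iff_card_roots, hgroots]
    have : (Finset.univ.val : Multiset K).card = Fintype.card K := rfl
    rw [this, hcard]
    exact (FiniteField.X_pow_card_sub_X_natDegree_eq K (Nat.one_lt_two_pow hn.ne')).symm
  obtain ⟨m, hm⟩ := hdn
  have hdvd1 : 2 ^ d - 1 ∣ 2 ^ n - 1 := by
    have := Nat.sub_dvd_pow_sub_pow (2 ^ d) 1 m
    simpa [← pow_mul, ← hm] using this
  obtain ⟨t, ht⟩ := hdvd1
  have hXdvd : (X : K[X]) ^ (2 ^ d - 1) - 1 ∣ X ^ (2 ^ n - 1) - 1 := by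
    have := sub_dvd_pow_sub_pow ((X : K[X]) ^ (2 ^ d - 1)) 1 t
    simpa [← pow_mul, ← ht] using this
  have hfact : ∀ a : ℕ, a ≠ 0 → (X : K[X]) ^ a - X = X * (X ^ (a - 1) - 1) := by
    intro a ha
    rw [mul_sub, mul_one, ← pow_succ', Nat.sub_add_cancel (Nat.one_le_iff_ne_zero.mpr ha)]
  have hfg : f ∣ g := by
    rw [hf, hg, hfact _ (pow_ne_zero d two_ne_zero), hfact _ (pow_ne_zero n two_ne_zero)]
    exact mul_dvd_mul_left _ hXdvd
  have hf0 : f ≠ 0 := by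
    have := FiniteField.X_pow_card_sub_X_ne_zero K (Nat.one_lt_two_pow hd0)
    simpa [hf] using this
  have hfsep : f.Separable := galois_poly_separable 2 (2 ^ d) (dvd_pow_self 2 hd0)
  have hfsplits : Splits f := Splits.of_dvd hgsplits hg0 hfg
  have hfdeg : f.natDegree = 2 ^ d :=
    FiniteField.X_pow_card_sub_X_natDegree_eq K (Nat.one_lt_two_pow hd0)
  have hfroots : f.roots.card = 2 ^ d := by
    rw [splits_iff_card_roots] at hfsplits
    rw [hfsplits, hfdeg]
  have hmem : ∀ x : K, x ∈ f.roots.toFinset ↔ x ^ (2 ^ d) = x := by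
    intro x
    simp only [Multiset.mem_toFinset, mem_roots (p := X ^ 2 ^ d - X) hf0, IsRoot.def, hf, eval_sub, eval_pow,
      eval_X, sub_eq_zero, and_iff_right_iff_imp]
  have hset2 : {x : K | x ^ (2 ^ d) = x ∧ x ≠ 0 ∧ x ≠ 1}
      = ↑(f.roots.toFinset \ ({0, 1} : Finset K)) := by
    ext x
    simp only [Set.mem_setOf_eq, Finset.coe_sdiff, Set.mem_diff, Finset.mem_coe, hmem,
      Finset.coe_insert, Finset.coe_singleton, Set.mem_insert_iff, Set.mem_singleton_iff,
      not_or]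
  have hsub : ({0, 1} : Finset K) ⊆ f.roots.toFinset := by
    intro x hx
    rw [hmem]
    rcases Finset.mem_insert.mp hx with h | h
    · rw [h]; exact zero_pow (pow_ne_zero d two_ne_zero)
    · rw [Finset.mem_singleton.mp h]; exact one_pow _
  have hcard01 : ({0, 1} : Finset K).card = 2 := by
    rw [Finset.card_insert_of_notMem (by simp), Finset.card_singleton]
  rw [hset2, Set.ncard_coe_finset, Finset.card_sdiff_of_subset hsub, hcard01,
    Multiset.toFinset_card_of_nodup (f.nodup_roots hfsep), hfroots]

/-- the set of x ∈ F_q with x^{2^{2k}+1}+(x+1)^{2^{2k}+1}+1 = 0 and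
x^{2^k+1}+(x+1)^{2^k+1}+1 = 0 is exactly the subfield F_{2^d} (the fixed points of
x ↦ x^{2^d}); in particular the number of such x outside {0,1} is 2^d - 2. -/
theorem stmt_2 (n k : ℕ) (hn : 0 < n) (hk : 0 < k) (d : ℕ) (hd : d = Nat.gcd n k) :
    ({x : GaloisField 2 n |
        x ^ (2 ^ (2 * k) + 1) + (x + 1) ^ (2 ^ (2 * k) + 1) + 1 = 0 ∧
        x ^ (2 ^ k + 1) + (x + 1) ^ (2 ^ k + 1) + 1 = 0}
      = {x : GaloisField 2 n | x ^ (2 ^ d) = x}) ∧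
    {x : GaloisField 2 n |
        (x ^ (2 ^ (2 * k) + 1) + (x + 1) ^ (2 ^ (2 * k) + 1) + 1 = 0 ∧
         x ^ (2 ^ k + 1) + (x + 1) ^ (2 ^ k + 1) + 1 = 0) ∧ x ≠ 0 ∧ x ≠ 1}.ncard
      = 2 ^ d - 2 := by
  classical
  set K := GaloisField 2 n
  haveI : Fintype K := Fintype.ofFinite _
  have hcard : Fintype.card K = 2 ^ n := by
    rw [← Nat.card_eq_fintype_card]; exact GaloisField.card 2 n hn.ne'
  have hd0 : d ≠ 0 := by
    rw [hd]; exact (Nat.gcd_pos_of_pos_left k hn).ne'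
  have hdn : d ∣ n := hd ▸ Nat.gcd_dvd_left n k
  have hdk : d ∣ k := hd ▸ Nat.gcd_dvd_right n k
  have hpc : ∀ x : K, x ^ (2 ^ n) = x := fun x => by
    have := FiniteField.pow_card x; rwa [hcard] at this
  have haz : ∀ a b : K, a + b = 0 ↔ a = b := fun a b => by
    rw [add_eq_zero_iff_eq_neg, CharTwo.neg_eq]
  have hiff : ∀ x : K,
      (x ^ (2 ^ (2 * k) + 1) + (x + 1) ^ (2 ^ (2 * k) + 1) + 1 = 0 ∧
       x ^ (2 ^ k + 1) + (x + 1) ^ (2 ^ k + 1) + 1 = 0) ↔ x ^ (2 ^ d) = x := by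
    intro x
    rw [eq_simp, eq_simp, haz, haz]
    constructor
    · rintro ⟨-, h2⟩
      exact hd ▸ gcd_fix x n k (hpc x) h2
    · intro h
      have h1 : x ^ (2 ^ k) = x := by
        have := iter_fix x d h (k / d)
        rwa [Nat.mul_div_cancel' hdk] at this
      refine ⟨?_, h1⟩
      have := iter_fix x d h (2 * (k / d))
      rwa [show d * (2 * (k / d)) = 2 * k by
        rw [← mul_assoc, mul_comm d 2, mul_assoc, Nat.mul_div_cancel' hdk]] at this
    
  constructor
  · ext x
    exact hiff x
  · have : {x : K |
        (x ^ (2 ^ (2 * k) + 1) + (x + 1) ^ (2 ^ (2 * k) + 1) + 1 = 0 ∧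
         x ^ (2 ^ k + 1) + (x + 1) ^ (2 ^ k + 1) + 1 = 0) ∧ x ≠ 0 ∧ x ≠ 1}
        = {x : K | x ^ (2 ^ d) = x ∧ x ≠ 0 ∧ x ≠ 1} := by
      ext x
      exact and_congr_left' (hiff x)
    rw [this]
    exact count_fix' n d hn hd0 hdn
end

section
/- Let q = 2^n, k a positive integer with d = gcd(n,k), and α, β ∈ F_q with (α,β) ≠ (0,0). Define the linearized polynomial φ_{α,β}(x) = α^{2^{2k}} x^{2^{4k}} + β^{2^{2k}} x^{2^{3k}} + β^{2^k} x^{2^k} + α x. Then the set of roots of φ_{α,β} in F_q is an F_{2^d}-vector subspace of F_q of dimension at most 4. -/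
open Finset

section Skew
variable {E : Type*} [Field E] (σ : E →+* E)

lemma iter_mul (i : ℕ) (x y : E) : σ^[i] (x * y) = σ^[i] x * σ^[i] y := by
  induction i with
  | zero => rfl
  | succ i ih => rw [Function.iterate_succ_apply', Function.iterate_succ_apply',
      Function.iterate_succ_apply', ih, map_mul]

lemma iter_ne_zero (i : ℕ) (x : E) (hx : x ≠ 0) : σ^[i] x ≠ 0 := by
  induction i with
  | zero => exact hx
  | succ i ih => rw [Function.iterate_succ_apply']; simpa using ih

lemma telescope (b : ℕ → E) (m : ℕ) (x : E) :
    ∑ i ∈ range (m + 1), b i * σ^[i] x =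
      ∑ j ∈ range m, (-(∑ i ∈ range (j + 1), b i)) * (σ^[j + 1] x - σ^[j] x)
        + (∑ i ∈ range (m + 1), b i) * σ^[m] x := by
  induction m with
  | zero => simp
  | succ m ih =>
      rw [Finset.sum_range_succ (fun i => b i * σ^[i] x), ih,
        Finset.sum_range_succ (fun j => (-(∑ i ∈ range (j + 1), b i)) * (σ^[j + 1] x - σ^[j] x)),
        Finset.sum_range_succ b (m + 1)]
      ring

lemma skew_dep : ∀ (r : ℕ) (a : ℕ → E), a r ≠ 0 → ∀ v : Fin (r + 1) → E,
    (∀ j, ∑ i ∈ range (r + 1), a i * σ^[i] (v j) = 0) →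
    ∃ c : Fin (r + 1) → E, (∀ j, σ (c j) = c j) ∧ c ≠ 0 ∧ ∑ j, c j * v j = 0 := by
  intro r
  induction r with
  | zero =>
      intro a ha v hv
      have h0 := hv 0
      simp only [zero_add, range_one, sum_singleton, Function.iterate_zero_apply] at h0
      have hv0 : v 0 = 0 := by
        rcases mul_eq_zero.1 h0 with h | h
        · exact absurd h ha
        · exact h
      exact ⟨fun _ => 1, fun _ => map_one σ, fun h => one_ne_zero (congrFun h 0),
        by simp [hv0, Fin.sum_univ_one]⟩
  | succ r ih =>
      intro a ha v hv
      set l : Fin (r + 2) := Fin.last (r + 1) with hl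
      by_cases hvl : v l = 0
      · refine ⟨fun j => if j = l then 1 else 0, ?_, ?_, ?_⟩
        · intro j; by_cases h : j = l <;> simp [h]
        · intro h
          have := congrFun h l
          simp at this
        · have : ∀ j : Fin (r + 2), (if j = l then (1:E) else 0) * v j
              = if j = l then v j else 0 := by
            intro j; by_cases h : j = l <;> simp [h]
          rw [Fintype.sum_congr _ _ this, Fintype.sum_ite_eq' l v]
          exact hvl
      · -- main case
        set u : Fin (r + 2) → E := fun t => v t / v l with hu
        set b : ℕ → E := fun i => a i * σ^[i] (v l) with hb
        have hSfull : ∑ i ∈ range (r + 2), b i = 0 := by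
          have := hv l
          simpa [hb, iter_mul] using this
        have hvl2 : ∀ t : Fin (r + 2), v l * u t = v t := by
          intro t; rw [hu]; field_simp
        have hiter_sub : ∀ (j : ℕ) (x y : E), σ^[j] (x - y) = σ^[j] x - σ^[j] y := by
          intro j x y
          induction j with
          | zero => rfl
          | succ j ihj => rw [Function.iterate_succ_apply', Function.iterate_succ_apply',
              Function.iterate_succ_apply', ihj, map_sub]
        set w : Fin (r + 1) → E := fun t => σ (u t.castSucc) - u t.castSucc with hw
        set c' : ℕ → E := fun j => -(∑ i ∈ range (j + 1), b i) with hc'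
        have hker : ∀ t : Fin (r + 1), ∑ j ∈ range (r + 1), c' j * σ^[j] (w t) = 0 := by
          intro t
          have h2 : ∀ j : ℕ, σ^[j] (w t) = σ^[j + 1] (u t.castSucc) - σ^[j] (u t.castSucc) := by
            intro j
            rw [hw, hiter_sub, ← Function.iterate_succ_apply]
          have h3 := telescope σ b (r + 1) (u t.castSucc)
          have h4 : ∑ i ∈ range (r + 2), b i * σ^[i] (u t.castSucc) = 0 := by
            calc ∑ i ∈ range (r + 2), b i * σ^[i] (u t.castSucc)
                = ∑ i ∈ range (r + 2), a i * σ^[i] (v t.castSucc) := by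
                  refine Finset.sum_congr rfl fun i _ => ?_
                  rw [hb, mul_assoc, ← iter_mul, hvl2]
              _ = 0 := hv t.castSucc
          rw [h3, hSfull, zero_mul, add_zero] at h4
          calc ∑ j ∈ range (r + 1), c' j * σ^[j] (w t)
              = ∑ j ∈ range (r + 1), (-(∑ i ∈ range (j + 1), b i)) *
                  (σ^[j + 1] (u t.castSucc) - σ^[j] (u t.castSucc)) := by
                refine Finset.sum_congr rfl fun j _ => by rw [h2, hc']
            _ = 0 := h4
        have htop : c' r ≠ 0 := by
          have hS : (∑ i ∈ range (r + 1), b i) + b (r + 1) = 0 := by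
            rw [← Finset.sum_range_succ]; exact hSfull
          have hceq : c' r = b (r + 1) := by
            have h5 : ∑ i ∈ range (r + 1), b i = -b (r + 1) := eq_neg_of_add_eq_zero_left hS
            rw [hc']; simp only [h5, neg_neg]
          rw [hceq, hb]
          exact mul_ne_zero ha (iter_ne_zero σ _ _ hvl)
        obtain ⟨lam, hlamfix, hlamne, hlamsum⟩ := ih c' htop w hker
        set μ : E := ∑ t, lam t * u t.castSucc with hμ
        have hfixμ : σ μ = μ := by
          rw [hμ, map_sum]
          have hstep : ∀ t : Fin (r + 1), σ (lam t * u t.castSucc)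
              = lam t * u t.castSucc + lam t * w t := by
            intro t; rw [map_mul, hlamfix, hw]; ring
          rw [Fintype.sum_congr _ _ hstep, Finset.sum_add_distrib, hlamsum, add_zero]
        refine ⟨Fin.snoc lam (-μ), ?_, ?_, ?_⟩
        · intro j
          refine Fin.lastCases ?_ ?_ j
          · rw [Fin.snoc_last, map_neg, hfixμ]
          · intro t; rw [Fin.snoc_castSucc]; exact hlamfix t
        · intro h
          apply hlamne
          funext t
          have := congrFun h t.castSucc
          rwa [Fin.snoc_castSucc] at this
        · rw [Fin.sum_univ_castSucc]
          simp only [Fin.snoc_castSucc, Fin.snoc_last]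
          rw [← hl]
          have hstep : ∀ t : Fin (r + 1), lam t * v t.castSucc
              = lam t * u t.castSucc * v l := by
            intro t
            rw [← hvl2 t.castSucc]
            ring
          rw [Finset.sum_congr rfl (fun t _ => hstep t), ← Finset.sum_mul, ← hμ]
          ring

open Finset Polynomial

lemma pow_pow_fix {M : Type*} [Monoid M] (x : M) (a : ℕ) (h : x ^ 2 ^ a = x) :
    ∀ m : ℕ, x ^ 2 ^ (a * m) = x := by
  intro m
  induction m with
  | zero => simp
  | succ m ih => rw [Nat.mul_succ, pow_add, pow_mul, ih, h]

lemma nat_bezout (n k : ℕ) (hn : 0 < n) (hk : 0 < k) :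
    ∃ u v : ℕ, Nat.gcd n k + u * n = v * k := by
  have hab := Nat.gcd_eq_gcd_ab n k
  set a := Nat.gcdA n k
  set b := Nat.gcdB n k
  set M : ℤ := a.natAbs + b.natAbs + 1 with hM
  have hk1 : (1 : ℤ) ≤ (k : ℤ) := by exact_mod_cast hk
  have hn1 : (1 : ℤ) ≤ (n : ℤ) := by exact_mod_cast hn
  have ha1 : (a : ℤ) ≤ a.natAbs := Int.le_natAbs
  have hb1 : -(b : ℤ) ≤ b.natAbs := by
    rw [← Int.natAbs_neg]; exact Int.le_natAbs
  have hM0 : 0 ≤ M := by positivity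
  have hu0 : 0 ≤ M * k - a := by nlinarith
  have hv0 : 0 ≤ b + M * n := by nlinarith
  refine ⟨(M * k - a).toNat, (b + M * n).toNat, ?_⟩
  have : (Nat.gcd n k : ℤ) + (M * k - a) * n = (b + M * n) * k := by
    rw [hab]; ring
  zify
  rw [Int.toNat_of_nonneg hu0, Int.toNat_of_nonneg hv0]
  exact this

lemma fix_gcd_s4 {M : Type*} [Monoid M] (x : M) (n k : ℕ) (hn : 0 < n) (hk : 0 < k)
    (h1 : x ^ 2 ^ n = x) (h2 : x ^ 2 ^ k = x) : x ^ 2 ^ Nat.gcd n k = x := by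
  obtain ⟨u, v, huv⟩ := nat_bezout n k hn hk
  have e1 : x ^ 2 ^ (v * k) = x := by rw [mul_comm]; exact pow_pow_fix x k h2 v
  have e2 : x ^ 2 ^ (Nat.gcd n k + u * n) = x ^ 2 ^ Nat.gcd n k := by
    rw [add_comm, pow_add, pow_mul, mul_comm u n, pow_pow_fix x n h1 u]
  rw [← e2, huv, e1]

lemma card_fix_s4 {E : Type*} [Field E] [Fintype E] (n d : ℕ) (hd0 : 0 < d) (hn0 : 0 < n)
    (hdn : d ∣ n) (hcard : Fintype.card E = 2 ^ n) :
    {x : E | x ^ 2 ^ d = x}.ncard = 2 ^ d := by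
  classical
  set f : E[X] := X ^ 2 ^ d - X with hf
  set g : E[X] := X ^ 2 ^ n - X with hg
  have hfne : f ≠ 0 := FiniteField.X_pow_card_pow_sub_X_ne_zero E hd0.ne' one_lt_two
  have hgne : g ≠ 0 := FiniteField.X_pow_card_pow_sub_X_ne_zero E hn0.ne' one_lt_two
  -- divisibility
  obtain ⟨t, ht⟩ := hdn
  have hdvd1 : (2 ^ d - 1 : ℕ) ∣ 2 ^ n - 1 := by
    have h := Nat.sub_dvd_pow_sub_pow (2 ^ d) 1 t
    simpa [← pow_mul, ← ht, one_pow] using h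
  obtain ⟨s, hs⟩ := hdvd1
  have hfactf : f = X * ((X : E[X]) ^ (2 ^ d - 1) - 1) := by
    rw [hf, mul_sub, mul_one, ← pow_succ', Nat.sub_add_cancel Nat.one_le_two_pow]
  have hfactg : g = X * ((X : E[X]) ^ (2 ^ n - 1) - 1) := by
    rw [hg, mul_sub, mul_one, ← pow_succ', Nat.sub_add_cancel Nat.one_le_two_pow]
  have hdvd : f ∣ g := by
    rw [hfactf, hfactg]
    refine mul_dvd_mul_left X ?_
    rw [hs, pow_mul]
    simpa using sub_dvd_pow_sub_pow ((X : E[X]) ^ (2 ^ d - 1)) 1 s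
  -- g splits
  have hgroots : g.roots = Finset.univ.val := by
    have := FiniteField.roots_X_pow_card_sub_X E
    rwa [hcard] at this
  have hgdeg : g.natDegree = 2 ^ n :=
    FiniteField.X_pow_card_pow_sub_X_natDegree_eq E hn0.ne' one_lt_two
  have hfdeg : f.natDegree = 2 ^ d :=
    FiniteField.X_pow_card_pow_sub_X_natDegree_eq E hd0.ne' one_lt_two
  have hgsplits : Splits g := by
    rw [splits_iff_card_roots, hgroots, hgdeg, ← Finset.card_def, Finset.card_univ, hcard]
  have hfsplits : Splits f :=
    hgsplits.of_dvd hgne hdvd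
  have hfcard : f.roots.card = 2 ^ d := by
    rw [splits_iff_card_roots] at hfsplits
    rw [hfsplits, hfdeg]
  have hnodup : f.roots.Nodup :=
    Multiset.nodup_of_le (roots.le_of_dvd hgne hdvd) (by rw [hgroots]; exact Finset.univ.nodup)
  have hset : {x : E | x ^ 2 ^ d = x} = ↑f.roots.toFinset := by
    ext x
    simp only [Set.mem_setOf_eq, Finset.coe_sort_coe, Multiset.mem_toFinset, Finset.mem_coe,
      mem_roots', hf, IsRoot.def, eval_sub, eval_pow, eval_X, sub_eq_zero]
    exact ⟨fun h => ⟨hfne, h⟩, fun h => h.2⟩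
  rw [hset, Set.ncard_coe_finset, Multiset.toFinset_card_of_nodup hnodup, hfcard]

set_option maxHeartbeats 2000000 in
set_option synthInstance.maxHeartbeats 1000000 in
/-- for (α,β) ≠ (0,0), the set of roots in F_q of
φ_{α,β}(x) = α^{2^{2k}} x^{2^{4k}} + β^{2^{2k}} x^{2^{3k}} + β^{2^k} x^{2^k} + α x
is an F_{2^d}-vector subspace of F_q of dimension at most 4 (so it contains 0, is closed
under addition and under multiplication by elements of the subfield F_{2^d}, and its
cardinality is (2^d)^m for some m ≤ 4). -/
theorem stmt_4 (n k : ℕ) (hn : 0 < n) (hk : 0 < k) (d : ℕ) (hd : d = Nat.gcd n k)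
    (α β : GaloisField 2 n) (hαβ : (α, β) ≠ (0, 0))
    (V : Set (GaloisField 2 n))
    (hV : V = {x : GaloisField 2 n |
      α ^ (2 ^ (2 * k)) * x ^ (2 ^ (4 * k)) + β ^ (2 ^ (2 * k)) * x ^ (2 ^ (3 * k))
        + β ^ (2 ^ k) * x ^ (2 ^ k) + α * x = 0}) :
    (0 : GaloisField 2 n) ∈ V ∧
    (∀ x ∈ V, ∀ y ∈ V, x + y ∈ V) ∧
    (∀ c : GaloisField 2 n, c ^ (2 ^ d) = c → ∀ x ∈ V, c * x ∈ V) ∧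
    (∃ m : ℕ, m ≤ 4 ∧ V.ncard = (2 ^ d) ^ m) := by
  classical
  have hd0 : 0 < d := hd ▸ Nat.gcd_pos_of_pos_left k hn
  have hdn : d ∣ n := hd ▸ Nat.gcd_dvd_left n k
  have hdk : d ∣ k := hd ▸ Nat.gcd_dvd_right n k
  letI : Fintype (GaloisField 2 n) := Fintype.ofFinite _
  have hcard : Fintype.card (GaloisField 2 n) = 2 ^ n := by
    rw [← Nat.card_eq_fintype_card]; exact GaloisField.card 2 n hn.ne'
  -- part 1
  have h0V : (0 : GaloisField 2 n) ∈ V := by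
    rw [hV]
    simp only [Set.mem_setOf_eq]
    rw [zero_pow (by positivity), zero_pow (by positivity), zero_pow (by positivity)]
    ring
  -- part 2
  have haddV : ∀ x ∈ V, ∀ y ∈ V, x + y ∈ V := by
    intro x hx y hy
    rw [hV] at hx hy ⊢
    simp only [Set.mem_setOf_eq] at hx hy ⊢
    rw [add_pow_char_pow, add_pow_char_pow, add_pow_char_pow]
    linear_combination hx + hy
  -- part 3
  have hsmulV : ∀ c : GaloisField 2 n, c ^ (2 ^ d) = c → ∀ x ∈ V, c * x ∈ V := by
    intro c hc x hx
    obtain ⟨s, hs⟩ := hdk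
    have hck : c ^ 2 ^ k = c := by rw [hs]; exact pow_pow_fix c d hc s
    have hc1 : ∀ j : ℕ, c ^ 2 ^ (j * k) = c := by
      intro j; rw [mul_comm]; exact pow_pow_fix c k hck j
    rw [hV] at hx ⊢
    simp only [Set.mem_setOf_eq] at hx ⊢
    rw [mul_pow, mul_pow, mul_pow, hc1 4, hc1 3, show (2:ℕ)^k = 2^(1*k) by rw [one_mul],
      hc1 1]
    linear_combination c * hx
  refine ⟨h0V, haddV, hsmulV, ?_⟩
  -- part 4
  set σ : GaloisField 2 n →+* GaloisField 2 n := iterateFrobenius (GaloisField 2 n) 2 k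
    with hσdef
  have hσ : ∀ (i : ℕ) (x : GaloisField 2 n), σ^[i] x = x ^ 2 ^ (i * k) := by
    intro i
    induction i with
    | zero => intro x; simp
    | succ i ih =>
        intro x
        rw [Function.iterate_succ_apply', ih, hσdef, iterateFrobenius_def, ← pow_mul,
          ← pow_add, Nat.succ_mul]
  have hfix_iff : ∀ x : GaloisField 2 n, σ x = x ↔ x ^ 2 ^ d = x := by
    intro x
    rw [hσdef, iterateFrobenius_def]
    constructor
    · intro h
      rw [hd]
      exact fix_gcd_s4 x n k hn hk (by rw [← hcard]; exact FiniteField.pow_card x) h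
    · intro h
      obtain ⟨s, hs⟩ := hdk
      rw [hs]
      exact pow_pow_fix x d h s
  set a : ℕ → GaloisField 2 n := fun i =>
    if i = 0 then α else if i = 1 then β ^ 2 ^ k else if i = 3 then β ^ 2 ^ (2 * k)
      else if i = 4 then α ^ 2 ^ (2 * k) else 0 with ha
  have ha0 : a 0 = α := by norm_num [ha]
  have ha1 : a 1 = β ^ 2 ^ k := by norm_num [ha]
  have ha2 : a 2 = 0 := by norm_num [ha]
  have ha3 : a 3 = β ^ 2 ^ (2 * k) := by norm_num [ha]
  have ha4 : a 4 = α ^ 2 ^ (2 * k) := by norm_num [ha]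
  have hsum : ∀ x : GaloisField 2 n, ∑ i ∈ Finset.range 5, a i * σ^[i] x
      = α ^ (2 ^ (2 * k)) * x ^ (2 ^ (4 * k)) + β ^ (2 ^ (2 * k)) * x ^ (2 ^ (3 * k))
        + β ^ (2 ^ k) * x ^ (2 ^ k) + α * x := by
    intro x
    rw [show (5 : ℕ) = 4 + 1 from rfl, Finset.sum_range_succ, Finset.sum_range_succ,
      Finset.sum_range_succ, Finset.sum_range_succ, Finset.sum_range_one,
      ha0, ha1, ha2, ha3, ha4, hσ, hσ, hσ, hσ, hσ]
    norm_num
    ring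
  have hmem : ∀ x : GaloisField 2 n, x ∈ V ↔ ∑ i ∈ Finset.range 5, a i * σ^[i] x = 0 := by
    intro x
    rw [hV, Set.mem_setOf_eq, hsum x]
  have hdep : ∀ v : Fin 5 → GaloisField 2 n, (∀ j, v j ∈ V) →
      ∃ c : Fin 5 → GaloisField 2 n, (∀ j, σ (c j) = c j) ∧ c ≠ 0 ∧ ∑ j, c j * v j = 0 := by
    intro v hv
    by_cases hα : α = 0
    · have hβ : β ≠ 0 := by
        intro hβ; exact hαβ (by rw [hα, hβ])
      have ha3' : a 3 ≠ 0 := by rw [ha3]; exact pow_ne_zero _ hβ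
      have hker : ∀ t : Fin 4, ∑ i ∈ Finset.range 4, a i * σ^[i] (v t.castSucc) = 0 := by
        intro t
        have h5 := (hmem (v t.castSucc)).1 (hv t.castSucc)
        rw [show (5 : ℕ) = 4 + 1 from rfl, Finset.sum_range_succ] at h5
        have ha4' : a 4 = 0 := by rw [ha4, hα]; exact zero_pow (by positivity)
        rwa [ha4', zero_mul, add_zero] at h5
      obtain ⟨c, hcfix, hcne, hcsum⟩ :=
        skew_dep σ 3 a ha3' (fun t : Fin 4 => v t.castSucc) hker
      refine ⟨Fin.snoc c 0, ?_, ?_, ?_⟩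
      · intro j
        refine Fin.lastCases ?_ ?_ j
        · rw [Fin.snoc_last, map_zero]
        · intro t; rw [Fin.snoc_castSucc]; exact hcfix t
      · intro h
        apply hcne; funext t
        have := congrFun h t.castSucc
        rwa [Fin.snoc_castSucc] at this
      · rw [Fin.sum_univ_castSucc]
        simp only [Fin.snoc_castSucc, Fin.snoc_last, zero_mul, add_zero]
        exact hcsum
    · have ha4' : a 4 ≠ 0 := by rw [ha4]; exact pow_ne_zero _ hα
      exact skew_dep σ 4 a ha4' v (fun j => (hmem (v j)).1 (hv j))
  -- the subfield of 2^d-fixed points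
  set K : Subfield (GaloisField 2 n) :=
    { carrier := {x : GaloisField 2 n | x ^ 2 ^ d = x}
      mul_mem' := by
        intro x y hx hy
        simp only [Set.mem_setOf_eq] at *
        rw [mul_pow, hx, hy]
      one_mem' := by simp
      add_mem' := by
        intro x y hx hy
        simp only [Set.mem_setOf_eq] at *
        rw [add_pow_char_pow, hx, hy]
      zero_mem' := by
        simp only [Set.mem_setOf_eq]
        exact zero_pow (by positivity)
      neg_mem' := by
        intro x hx
        simpa [CharTwo.neg_eq] using hx
      inv_mem' := by
        intro x hx
        simp only [Set.mem_setOf_eq] at *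
        rw [inv_pow, hx] } with hK
  letI : Algebra ↥K (GaloisField 2 n) := RingHom.toAlgebra K.subtype
  have hsmul_eq : ∀ (c : ↥K) (x : GaloisField 2 n), c • x = (c : GaloisField 2 n) * x :=
    fun c x => rfl
  set W : Submodule ↥K (GaloisField 2 n) :=
    { carrier := V
      add_mem' := by intro x y hx hy; exact haddV x hx y hy
      zero_mem' := h0V
      smul_mem' := by
        intro c x hx
        rw [hsmul_eq]
        exact hsmulV (c : GaloisField 2 n) c.2 x hx } with hWdef
  haveI : Fintype ↥K := Fintype.ofFinite _
  haveI : Fintype ↥W := Fintype.ofFinite _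
  haveI : Module.Finite ↥K ↥W := Module.finite_iff_finite.mpr inferInstance
  have hcardK : Fintype.card ↥K = 2 ^ d := by
    rw [← Nat.card_eq_fintype_card]
    have h1 : Nat.card ↥K = Nat.card {x : GaloisField 2 n | x ^ 2 ^ d = x} := rfl
    rw [h1, Nat.card_coe_set_eq]
    exact card_fix_s4 n d hd0 hn hdn hcard
  have hfr : Module.finrank ↥K ↥W ≤ 4 := by
    by_contra hgt
    push_neg at hgt
    have h5 : 5 ≤ Module.finrank ↥K ↥W := hgt
    set b := Module.finBasis ↥K ↥W with hb
    set v : Fin 5 → GaloisField 2 n := fun j => ((b (Fin.castLE h5 j) : ↥W) : GaloisField 2 n)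
      with hv
    have hvV : ∀ j, v j ∈ V := fun j => (b (Fin.castLE h5 j) : ↥W).2
    obtain ⟨c, hcfix, hcne, hcsum⟩ := hdep v hvV
    set c' : Fin 5 → ↥K := fun j => ⟨c j, (hfix_iff (c j)).1 (hcfix j)⟩ with hc'
    have hlin := b.linearIndependent.comp (Fin.castLE h5) (Fin.castLE_injective h5)
    have hzero : ∑ j, c' j • b (Fin.castLE h5 j) = (0 : ↥W) := by
      have hcoe : ((∑ j, c' j • b (Fin.castLE h5 j) : ↥W) : GaloisField 2 n)
          = ∑ j, c j * v j := by
        rw [AddSubmonoidClass.coe_finset_sum]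
        refine Finset.sum_congr rfl fun j _ => ?_
        rw [Submodule.coe_smul, hsmul_eq]
      exact Subtype.ext (by rw [hcoe, hcsum]; rfl)
    have hall := Fintype.linearIndependent_iff.1 hlin c' hzero
    apply hcne
    funext j
    have := hall j
    rw [hc'] at this
    exact congrArg Subtype.val this
  refine ⟨Module.finrank ↥K ↥W, hfr, ?_⟩
  have h6 : Fintype.card ↥W = Fintype.card ↥K ^ Module.finrank ↥K ↥W := Module.card_eq_pow_finrank
  have h7 : V.ncard = Fintype.card ↥W := by
    rw [← Nat.card_eq_fintype_card]
    have h8 : Nat.card ↥W = Nat.card ↥V := rfl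
    rw [h8, Nat.card_coe_set_eq]
  rw [h7, h6, hcardK]
end Skew
end

section
/- Let q_0 = 2^d, s be a positive integer, H an s × s matrix over F_{q_0}, and F(X) = X H X^T the associated quadratic form on F_{q_0}^s. Let r be the rank of H + H^T. Then Σ_{X ∈ F_{q_0}^s} (-1)^{Tr_{F_{q_0}/F_2}(F(X))} ∈ {0, q_0^{s − r/2}, −q_0^{s − r/2}}. -/
open Matrix
open Module LinearMap

theorem even_finrank_range_of_alt (F : Type) [Field F] :
    ∀ (n : ℕ) (V : Type) [AddCommGroup V] [Module F V] [FiniteDimensional F V],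
      finrank F V = n → ∀ (B : V →ₗ[F] V →ₗ[F] F), (∀ x, B x x = 0) →
      Even (finrank F (LinearMap.range B)) := by
  intro n
  induction n using Nat.strong_induction_on with
  | _ n ih =>
    intro V _ _ _ hn B halt
    have hskew : ∀ x y, B x y = - B y x := by
      intro x y
      have h := halt (x + y)
      simp only [map_add, LinearMap.add_apply, halt] at h
      linear_combination h
    by_cases hB : B = 0
    · subst hB
      rw [LinearMap.range_zero]
      simpa using even_zero
    · obtain ⟨u₀, hu₀⟩ : ∃ u, B u ≠ 0 := by
        by_contra h
        push_neg at h
        exact hB (LinearMap.ext fun x => by rw [h x]; rfl)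
      obtain ⟨v, hv⟩ : ∃ v, B u₀ v ≠ 0 := by
        by_contra h
        push_neg at h
        exact hu₀ (LinearMap.ext fun y => h y)
      set u := (B u₀ v)⁻¹ • u₀ with hu_def
      have huv : B u v = 1 := by
        simp [hu_def, LinearMap.smul_apply, inv_mul_cancel₀ hv]
      have hvu : B v u = -1 := by rw [hskew, huv]
      set ψ : V →ₗ[F] F × F := (B u).prod (B v) with hψ
      have hψsurj : Function.Surjective ψ := by
        rintro ⟨a, b⟩
        refine ⟨a • v - b • u, ?_⟩
        simp [hψ, LinearMap.prod_apply, map_sub, _root_.map_smul, huv, hvu, halt,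
          Prod.ext_iff, smul_eq_mul]
      set U := LinearMap.ker ψ with hU
      have hrn : finrank F (LinearMap.range ψ) + finrank F U = n := by
        rw [hU, ← hn]; exact LinearMap.finrank_range_add_finrank_ker ψ
      have hrange2 : finrank F (LinearMap.range ψ) = 2 := by
        rw [LinearMap.range_eq_top.mpr hψsurj, finrank_top]
        simp [finrank_prod]
      have hUn : finrank F U + 2 = n := by omega
      have hmemU : ∀ x, x ∈ U ↔ B u x = 0 ∧ B v x = 0 := by
        intro x
        simp [hU, hψ, LinearMap.mem_ker, LinearMap.prod_apply, Prod.ext_iff]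
      have hdec : ∀ z : V, z + (B v z) • u - (B u z) • v ∈ U := by
        intro z
        rw [hmemU]
        constructor
        · simp [map_add, map_sub, _root_.map_smul, huv, halt, smul_eq_mul]
        · simp [map_add, map_sub, _root_.map_smul, hvu, halt, smul_eq_mul]
      have hkerB_le : LinearMap.ker B ≤ U := by
        intro x hx
        rw [LinearMap.mem_ker] at hx
        rw [hmemU]
        constructor <;> (rw [hskew, hx]; simp)
      set B' : U →ₗ[F] U →ₗ[F] F := B.compl₁₂ U.subtype U.subtype with hB'
      have hB'apply : ∀ x y : U, B' x y = B (x : V) (y : V) := fun x y => rfl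
      have halt' : ∀ x : U, B' x x = 0 := fun x => halt (x : V)
      have hkerB' : LinearMap.ker B' = (LinearMap.ker B).comap U.subtype := by
        ext x
        simp only [LinearMap.mem_ker, Submodule.mem_comap, Submodule.coe_subtype]
        constructor
        · intro hx0
          have hxy : ∀ y : U, B (x : V) (y : V) = 0 := by
            intro y
            have := LinearMap.ext_iff.mp hx0 y
            rwa [hB'apply] at this
          have hxU := (hmemU (x : V)).mp x.2
          have hxu : B (x : V) u = 0 := by rw [hskew, hxU.1, neg_zero]
          have hxv : B (x : V) v = 0 := by rw [hskew, hxU.2, neg_zero]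
          apply LinearMap.ext
          intro z
          have h0 : B (x : V) (z + (B v z) • u - (B u z) • v) = 0 := hxy ⟨_, hdec z⟩
          simpa [map_add, map_sub, _root_.map_smul, hxu, hxv, smul_eq_mul] using h0
        · intro hx
          apply LinearMap.ext
          intro y
          have : B (x : V) (y : V) = 0 := by rw [hx]; rfl
          rw [hB'apply, this]
          rfl
      have hker_eq : finrank F (LinearMap.ker B') = finrank F (LinearMap.ker B) := by
        rw [hkerB']
        exact LinearEquiv.finrank_eq (Submodule.comapSubtypeEquivOfLe hkerB_le)
      have e1 : finrank F (LinearMap.range B) + finrank F (LinearMap.ker B) = n := by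
        rw [← hn]; exact LinearMap.finrank_range_add_finrank_ker B
      have e2 : finrank F (LinearMap.range B') + finrank F (LinearMap.ker B) = finrank F U := by
        rw [← hker_eq]; exact LinearMap.finrank_range_add_finrank_ker B'
      obtain ⟨k, hk⟩ := ih (finrank F U) (by omega) U rfl B' halt'
      exact ⟨k + 1, by omega⟩

theorem even_rank_of_alt {F : Type} [Field F] {s : ℕ} (A : Matrix (Fin s) (Fin s) F)
    (hA : ∀ x : Fin s → F, x ⬝ᵥ A.mulVec x = 0) : Even A.rank := by
  classical
  set dotL : (Fin s → F) →ₗ[F] ((Fin s → F) →ₗ[F] F) :=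
    LinearMap.mk₂ F (fun x y => x ⬝ᵥ y)
      (fun m₁ m₂ n => add_dotProduct m₁ m₂ n)
      (fun c m n => smul_dotProduct c m n)
      (fun m n₁ n₂ => dotProduct_add m n₁ n₂)
      (fun c m n => dotProduct_smul c m n) with hdotL
  have hinj : Function.Injective dotL := by
    intro x y hxy
    funext i
    have := LinearMap.ext_iff.mp hxy (Pi.single i 1)
    simpa [hdotL, LinearMap.mk₂_apply, dotProduct_single] using this
  set Bm : (Fin s → F) →ₗ[F] ((Fin s → F) →ₗ[F] F) := dotL.comp A.mulVecLin with hBm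
  have hBmalt : ∀ x, Bm x x = 0 := by
    intro x
    have h : (A.mulVec x) ⬝ᵥ x = 0 := by rw [dotProduct_comm]; exact hA x
    simpa [hBm, hdotL, LinearMap.mk₂_apply, Matrix.mulVecLin_apply] using h
  have hrank : A.rank = finrank F (LinearMap.range Bm) := by
    rw [Matrix.rank, hBm, LinearMap.range_comp]
    exact LinearEquiv.finrank_eq
      (Submodule.equivMapOfInjective dotL hinj (LinearMap.range A.mulVecLin))
  rw [hrank]
  exact even_finrank_range_of_alt F (finrank F (Fin s → F)) _ rfl Bm hBmalt

lemma neg_one_pow_val_add (a b : ZMod 2) :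
    ((-1 : ℤ)) ^ (a + b).val = (-1) ^ a.val * (-1) ^ b.val := by revert a b; decide

lemma sum_neg_one_pow_eq_zero {G : Type} [AddCommGroup G] [Fintype G]
    (φ : G → ZMod 2) (hadd : ∀ a b, φ (a + b) = φ a + φ b)
    (g₀ : G) (hg₀ : φ g₀ ≠ 0) :
    ∑ g : G, ((-1 : ℤ)) ^ (φ g).val = 0 := by
  have h1 : φ g₀ = 1 := (by decide : ∀ a : ZMod 2, a ≠ 0 → a = 1) _ hg₀
  have key : ∑ g : G, ((-1 : ℤ)) ^ (φ (g + g₀)).val = ∑ g : G, ((-1 : ℤ)) ^ (φ g).val :=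
    Fintype.sum_equiv (Equiv.addRight g₀) _ _ (fun g => rfl)
  have key2 : ∀ g : G, ((-1 : ℤ)) ^ (φ (g + g₀)).val = -((-1 : ℤ)) ^ (φ g).val := by
    intro g
    rw [hadd, h1, neg_one_pow_val_add]
    simp [ZMod.val_one]
  rw [Finset.sum_congr rfl (fun g _ => key2 g), Finset.sum_neg_distrib] at key
  linarith

lemma inner_sum_zero (d s : ℕ) [Fintype (GaloisField 2 d)]
    (v : Fin s → GaloisField 2 d) (hv : v ≠ 0) :
    ∑ x : Fin s → GaloisField 2 d,
      ((-1 : ℤ)) ^ (Algebra.trace (ZMod 2) (GaloisField 2 d) (x ⬝ᵥ v)).val = 0 := by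
  obtain ⟨c, hc⟩ : ∃ c, Algebra.trace (ZMod 2) (GaloisField 2 d) c ≠ 0 := by
    by_contra h; push_neg at h
    exact Algebra.trace_ne_zero (ZMod 2) (GaloisField 2 d) (LinearMap.ext fun c => h c)
  obtain ⟨i, hi⟩ : ∃ i, v i ≠ 0 := by
    by_contra h; push_neg at h; exact hv (funext h)
  apply sum_neg_one_pow_eq_zero
    (fun x => Algebra.trace (ZMod 2) (GaloisField 2 d) (x ⬝ᵥ v))
    (by intro a b; rw [add_dotProduct, map_add]) (Pi.single i (c * (v i)⁻¹))
  rwa [single_dotProduct, mul_assoc, inv_mul_cancel₀ hi, mul_one]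

/-- for a quadratic form F(X) = X H Xᵀ over F_{q₀} (q₀ = 2^d), with
r = rank(H + Hᵀ), the character sum ∑_X (-1)^{Tr(F(X))} is 0 or ±q₀^{s - r/2}. -/
theorem stmt_9 (d s : ℕ) (hd : 0 < d) (hs : 0 < s) [Fintype (GaloisField 2 d)]
    (H : Matrix (Fin s) (Fin s) (GaloisField 2 d)) (r : ℕ)
    (hr : r = (H + H.transpose).rank) :
    (∑ X : Fin s → GaloisField 2 d,
        (-1 : ℤ) ^ (Algebra.trace (ZMod 2) (GaloisField 2 d)
          (X ⬝ᵥ H.mulVec X)).val)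
      ∈ ({0, ((2 : ℤ) ^ d) ^ (s - r / 2), -((2 : ℤ) ^ d) ^ (s - r / 2)} : Set ℤ) := by
  classical
  set A := H + H.transpose with hA
  set χ : GaloisField 2 d → ℤ :=
    fun t => (-1 : ℤ) ^ (Algebra.trace (ZMod 2) (GaloisField 2 d) t).val with hχ
  set Q : (Fin s → GaloisField 2 d) → GaloisField 2 d :=
    fun x => x ⬝ᵥ H.mulVec x with hQ
  have hgoalEq : (∑ X : Fin s → GaloisField 2 d,
      (-1 : ℤ) ^ (Algebra.trace (ZMod 2) (GaloisField 2 d) (X ⬝ᵥ H.mulVec X)).val)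
      = ∑ X : Fin s → GaloisField 2 d, χ (Q X) := by
    simp only [hχ, hQ]
  rw [hgoalEq]
  set S := ∑ X : Fin s → GaloisField 2 d, χ (Q X) with hS
  -- basic facts
  have hchar2 : ∀ a : GaloisField 2 d, a + a = 0 := by
    intro a
    have h2 : (2 : GaloisField 2 d) = 0 := by exact_mod_cast CharP.cast_eq_zero (GaloisField 2 d) 2
    rw [← two_mul, h2, zero_mul]
  have hχmul : ∀ a b : GaloisField 2 d, χ (a + b) = χ a * χ b := by
    intro a b
    simp only [hχ, map_add]
    exact neg_one_pow_val_add _ _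
  have hχsq : ∀ a : GaloisField 2 d, χ a * χ a = 1 := by
    intro a
    simp only [hχ, ← pow_add]
    exact Even.neg_one_pow ⟨_, rfl⟩
  have hχzero : χ 0 = 1 := by simp only [hχ, map_zero, ZMod.val_zero, pow_zero]
  have halt : ∀ x : Fin s → GaloisField 2 d, x ⬝ᵥ A.mulVec x = 0 := by
    intro x
    rw [hA, add_mulVec, dotProduct_add, mulVec_transpose, dotProduct_comm x (x ᵥ* H),
      ← dotProduct_mulVec, hchar2]
  have hzx : ∀ x z : Fin s → GaloisField 2 d,
      z ⬝ᵥ H.mulVec x = x ⬝ᵥ H.transpose.mulVec z := by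
    intro x z
    rw [dotProduct_mulVec, dotProduct_comm, ← mulVec_transpose]
  have hQadd : ∀ x z : Fin s → GaloisField 2 d,
      Q (x + z) = Q x + Q z + x ⬝ᵥ A.mulVec z := by
    intro x z
    simp only [hQ, hA, Matrix.mulVec_add, Matrix.add_mulVec, dotProduct_add,
      add_dotProduct, hzx x z]
    abel
  -- the square of S
  have hSsq : S * S = ∑ z : Fin s → GaloisField 2 d,
      χ (Q z) * ∑ x : Fin s → GaloisField 2 d, χ (x ⬝ᵥ A.mulVec z) := by
    rw [hS, Finset.sum_mul_sum]
    have hfix : ∀ x : Fin s → GaloisField 2 d,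
        ∑ y : Fin s → GaloisField 2 d, χ (Q x) * χ (Q y)
        = ∑ z : Fin s → GaloisField 2 d, χ (Q z) * χ (x ⬝ᵥ A.mulVec z) := by
      intro x
      rw [← Fintype.sum_equiv (Equiv.addLeft x)
        (fun z => χ (Q z) * χ (x ⬝ᵥ A.mulVec z)) (fun y => χ (Q x) * χ (Q y)) ?_]
      intro z
      show χ (Q z) * χ (x ⬝ᵥ A.mulVec z) = χ (Q x) * χ (Q (x + z))
      rw [hQadd, hχmul, hχmul, ← mul_assoc, ← mul_assoc, hχsq, one_mul]
    rw [Finset.sum_congr rfl (fun x _ => hfix x), Finset.sum_comm]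
    exact Finset.sum_congr rfl (fun z _ => by rw [Finset.mul_sum])
  -- inner sum evaluation
  have hcardFq : (Fintype.card (GaloisField 2 d)) = 2 ^ d := by
    rw [← Nat.card_eq_fintype_card, GaloisField.card 2 d hd.ne']
  have hcardV : Fintype.card (Fin s → GaloisField 2 d) = (2 ^ d) ^ s := by
    rw [Fintype.card_fun, hcardFq, Fintype.card_fin]
  have hinner : ∀ z : Fin s → GaloisField 2 d,
      (∑ x : Fin s → GaloisField 2 d, χ (x ⬝ᵥ A.mulVec z))
      = if A.mulVec z = 0 then (((2 : ℤ) ^ d) ^ s) else 0 := by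
    intro z
    split_ifs with h
    · rw [Finset.sum_congr rfl (fun x _ => by rw [h, dotProduct_zero, hχzero]),
        Finset.sum_const, Finset.card_univ, nsmul_eq_mul, mul_one, hcardV]
      push_cast
      ring
    · simp only [hχ]
      exact inner_sum_zero d s _ h
  have hSsq2 : S * S = (∑ z ∈ Finset.univ.filter (fun z => A.mulVec z = 0), χ (Q z))
      * ((2 : ℤ) ^ d) ^ s := by
    rw [hSsq, Finset.sum_filter, Finset.sum_mul]
    apply Finset.sum_congr rfl
    intro z _
    rw [hinner z]
    split_ifs with h
    · ring
    · ring
  set Kr := LinearMap.ker (Matrix.mulVecLin A) with hKr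
  haveI : Fintype ↥Kr := Fintype.ofFinite _
  have hsubt : (∑ z ∈ Finset.univ.filter (fun z => A.mulVec z = 0), χ (Q z))
      = ∑ z : ↥Kr, χ (Q z.1) := by
    apply Finset.sum_subtype
    intro x
    simp [hKr, LinearMap.mem_ker, Matrix.mulVecLin_apply]
  by_cases hcase : ∀ z : ↥Kr, Algebra.trace (ZMod 2) (GaloisField 2 d) (Q z.1) = 0
  · -- trivial on the kernel: S^2 = q^(2s-r)
    have hT : (∑ z : ↥Kr, χ (Q z.1)) = (Fintype.card ↥Kr : ℤ) := by
      rw [Finset.sum_congr rfl (fun z _ => by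
        simp only [hχ]; rw [hcase z, ZMod.val_zero, pow_zero]),
        Finset.sum_const, Finset.card_univ, nsmul_eq_mul, mul_one]
    have hrn : A.rank + finrank (GaloisField 2 d) ↥Kr = s := by
      have h1 := LinearMap.finrank_range_add_finrank_ker (Matrix.mulVecLin A)
      rw [Module.finrank_fintype_fun_eq_card, Fintype.card_fin] at h1
      rw [Matrix.rank]
      exact h1
    have hrle : r ≤ s := by
      rw [hr]
      calc A.rank ≤ Fintype.card (Fin s) := Matrix.rank_le_card_width A
      _ = s := Fintype.card_fin s
    have hfinKr : finrank (GaloisField 2 d) ↥Kr = s - r := by omega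
    have hcardKr : Fintype.card ↥Kr = (2 ^ d) ^ (s - r) := by
      rw [card_eq_pow_finrank (K := GaloisField 2 d) (V := ↥Kr), hcardFq, hfinKr]
    obtain ⟨k, hk⟩ : Even r := hr ▸ even_rank_of_alt A halt
    have hSb : S * S = (((2:ℤ)^d) ^ (s - r/2)) * (((2:ℤ)^d) ^ (s - r/2)) := by
      rw [hSsq2, hsubt, hT, hcardKr]
      push_cast
      rw [← pow_add, ← pow_add]
      congr 1
      omega
    have hz : (S - ((2:ℤ)^d) ^ (s - r/2)) * (S + ((2:ℤ)^d) ^ (s - r/2)) = 0 := by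
      linear_combination hSb
    rcases mul_eq_zero.mp hz with h | h
    · have : S = ((2:ℤ)^d) ^ (s - r/2) := by linarith
      simp only [Set.mem_insert_iff, Set.mem_singleton_iff]
      tauto
    · have : S = -((2:ℤ)^d) ^ (s - r/2) := by linarith
      simp only [Set.mem_insert_iff, Set.mem_singleton_iff]
      tauto
  · -- nontrivial character on the kernel: S = 0
    push_neg at hcase
    obtain ⟨z₀, hz₀⟩ := hcase
    have hT0 : (∑ z : ↥Kr, χ (Q z.1)) = 0 := by
      simp only [hχ]
      apply sum_neg_one_pow_eq_zero
        (fun z : ↥Kr => Algebra.trace (ZMod 2) (GaloisField 2 d) (Q z.1)) ?_ z₀ hz₀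
      intro a b
      have hbker : A.mulVec b.1 = 0 := LinearMap.mem_ker.mp b.2
      show Algebra.trace (ZMod 2) (GaloisField 2 d) (Q (a.1 + b.1)) = _
      rw [hQadd, hbker, dotProduct_zero, add_zero, map_add]
    have hS20 : S * S = 0 := by rw [hSsq2, hsubt, hT0, zero_mul]
    have hS0 : S = 0 := mul_self_eq_zero.mp hS20
    simp only [Set.mem_insert_iff, Set.mem_singleton_iff]
    tauto
end

section
/- Let q_0 = 2^d and s a positive integer, H an s × s matrix over F_{q_0}, F(X) = X H X^T, and r = rank(H + H^T). As A ranges over F_{q_0}^s, the sum T(A) = Σ_{X ∈ F_{q_0}^s} (-1)^{Tr_{F_{q_0}/F_2}(F(X) + A X^T)} takes the value 0 for exactly q_0^s − q_0^r vectors A, the value q_0^{s − r/2} for exactly (q_0^r + q_0^{r/2})/2 vectors A, and the value −q_0^{s − r/2} for exactly (q_0^r − q_0^{r/2})/2 vectors A. -/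
section EvenRank
open Module

lemma alt_ker_even' : ∀ (n : ℕ) (K V : Type) [Field K] [AddCommGroup V] [Module K V]
    [FiniteDimensional K V] (β : V →ₗ[K] V →ₗ[K] K), (∀ x, β x x = 0) →
    Module.finrank K V = n →
    Even (Module.finrank K V - Module.finrank K (LinearMap.ker β)) := by
  intro n
  induction n using Nat.strong_induction_on with
  | _ n ih =>
    intro K V _ _ _ _ β halt hn
    have hskew : ∀ x y, β y x = -β x y := by
      intro x y
      have h := halt (x + y)
      simp only [map_add, LinearMap.add_apply, halt x, halt y] at h
      linear_combination h
    by_cases hβ : β = 0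
    · subst hβ
      rw [LinearMap.ker_zero, finrank_top, Nat.sub_self]
      exact Even.zero
    · -- find e, f with β e f = 1
      have : ∃ e y, β e y ≠ 0 := by
        by_contra hc
        push_neg at hc
        exact hβ (by ext e y; simp [hc])
      obtain ⟨e, y, hey⟩ := this
      set f := (β e y)⁻¹ • y with hf
      have hef : β e f = 1 := by
        simp [hf, inv_mul_cancel₀ hey]
      have hfe : β f e = -1 := by rw [hskew e f, hef]
      have hee : β e e = 0 := halt e
      have hff : β f f = 0 := halt f
      set φ : V →ₗ[K] K × K := (β e).prod (β f) with hφ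
      have hsurj : Function.Surjective φ := by
        rintro ⟨a, b⟩
        refine ⟨a • f - b • e, ?_⟩
        simp [hφ, hef, hfe, hee, hff, Prod.ext_iff]
      set W := LinearMap.ker φ with hW
      have hrange : LinearMap.range φ = ⊤ := LinearMap.range_eq_top.mpr hsurj
      have hWrank : finrank K W + 2 = finrank K V := by
        have h1 := LinearMap.finrank_range_add_finrank_ker φ
        rw [hrange] at h1
        have h2 : finrank K (⊤ : Submodule K (K × K)) = 2 := by
          rw [finrank_top]
          simp [Module.finrank_prod]
        rw [h2, ← hW] at h1
        omega
      -- restrict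
      set β' : W →ₗ[K] W →ₗ[K] K := (β.domRestrict W).compl₂ W.subtype with hβ'
      have hβ'app : ∀ (w z : W), β' w z = β (w : V) (z : V) := fun w z => rfl
      have hmemW : ∀ v : V, v ∈ W ↔ β e v = 0 ∧ β f v = 0 := by
        intro v
        simp [hW, hφ, LinearMap.mem_ker, Prod.ext_iff]
      have hmap : Submodule.map W.subtype (LinearMap.ker β') = LinearMap.ker β := by
        ext x
        simp only [Submodule.mem_map, LinearMap.mem_ker]
        constructor
        · rintro ⟨w, hw, rfl⟩
          ext v
          have hwe : β (w : V) e = 0 := by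
            rw [hskew e w, ((hmemW w).mp w.2).1, neg_zero]
          have hwf : β (w : V) f = 0 := by
            rw [hskew f w, ((hmemW w).mp w.2).2, neg_zero]
          have hvW : v + (β f v) • e - (β e v) • f ∈ W := by
            rw [hmemW]
            constructor
            · simp [hee, hef, mul_comm]
            · simp [hfe, hff]
          have h0 : β (w : V) (v + (β f v) • e - (β e v) • f) = 0 := by
            have := congrFun (congrArg (fun g => g.toFun) hw) ⟨_, hvW⟩
            simpa [hβ'app] using congrArg (fun g : W →ₗ[K] K => g ⟨_, hvW⟩) hw
          simp only [map_add, map_sub, map_smul, smul_eq_mul, hwe, hwf,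
            mul_zero, add_zero, sub_zero] at h0
          simpa using h0
        · intro hx
          have hxW : x ∈ W := by
            rw [hmemW]
            constructor
            · rw [hskew x e]
              simp [hx]
            · rw [hskew x f]
              simp [hx]
          refine ⟨⟨x, hxW⟩, ?_, rfl⟩
          ext z
          simp [hβ'app, hx]
      have hkereq : finrank K (LinearMap.ker β') = finrank K (LinearMap.ker β) := by
        rw [← hmap]
        exact (Submodule.equivMapOfInjective W.subtype (Submodule.injective_subtype W)
          (LinearMap.ker β')).finrank_eq
      have hlt : finrank K W < n := by omega
      have hIH := ih (finrank K W) hlt K W β' (fun w => halt (w : V)) rfl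
      have hle : finrank K (LinearMap.ker β') ≤ finrank K W := Submodule.finrank_le _
      obtain ⟨k, hk⟩ := hIH
      exact ⟨k + 1, by omega⟩

end EvenRank

open Matrix Module

section Helpers

noncomputable def chiK (d : ℕ) (a : GaloisField 2 d) : ℤ :=
  (-1) ^ (Algebra.trace (ZMod 2) (GaloisField 2 d) a).val

variable {d : ℕ}

lemma chiK_zero : chiK d 0 = 1 := by simp [chiK]

lemma chiK_add (a b : GaloisField 2 d) : chiK d (a + b) = chiK d a * chiK d b := by
  unfold chiK
  rw [map_add]
  have : ∀ x y : ZMod 2, ((-1 : ℤ)) ^ (x + y).val = (-1) ^ x.val * (-1) ^ y.val := by decide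
  exact this _ _

lemma chiK_vals (a : GaloisField 2 d) : chiK d a = 1 ∨ chiK d a = -1 := by
  unfold chiK
  have : ∀ x : ZMod 2, ((-1 : ℤ)) ^ x.val = 1 ∨ ((-1 : ℤ)) ^ x.val = -1 := by decide
  exact this _

lemma chiK_sq (a : GaloisField 2 d) : chiK d a * chiK d a = 1 := by
  rcases chiK_vals a with h | h <;> rw [h] <;> ring

lemma sum_eq_zero_of_neg_one {V : Type*} [AddCommGroup V] [Fintype V] (g : V → ℤ)
    (hg : ∀ x y, g (x + y) = g x * g y) {y : V} (hy : g y = -1) :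
    ∑ x : V, g x = 0 := by
  have h1 : ∑ x : V, g (y + x) = ∑ x : V, g x :=
    Fintype.sum_equiv (Equiv.addLeft y) _ _ (fun x => rfl)
  have h2 : ∑ x : V, g (y + x) = -∑ x : V, g x := by
    simp only [hg, hy]
    rw [← Finset.sum_neg_distrib]
    exact Finset.sum_congr rfl (fun x _ => by ring)
  have := h1.symm.trans h2
  linarith

lemma trace_hit {a : GaloisField 2 d} (ha : a ≠ 0) :
    ∃ b, Algebra.trace (ZMod 2) (GaloisField 2 d) (a * b) ≠ 0 := by
  have hnd := traceForm_nondegenerate (ZMod 2) (GaloisField 2 d)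
  by_contra hc
  push_neg at hc
  exact ha (hnd.1 a (fun b => by simpa [Algebra.traceForm_apply] using hc b))

lemma chiK_neg_one_of_ne {a : GaloisField 2 d}
    (h : Algebra.trace (ZMod 2) (GaloisField 2 d) a ≠ 0) : chiK d a = -1 := by
  unfold chiK
  have : ∀ x : ZMod 2, x ≠ 0 → ((-1 : ℤ)) ^ x.val = -1 := by decide
  exact this _ h

lemma sum_chi_dot_zero {s : ℕ} [Fintype (GaloisField 2 d)] :
    ∑ X : Fin s → GaloisField 2 d, chiK d ((0 : Fin s → GaloisField 2 d) ⬝ᵥ X) =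
      (Fintype.card (GaloisField 2 d) : ℤ) ^ s := by
  simp [chiK_zero, Fintype.card_pi]

lemma sum_chi_dot_ne {s : ℕ} [Fintype (GaloisField 2 d)]
    {v : Fin s → GaloisField 2 d} (hv : v ≠ 0) :
    ∑ X : Fin s → GaloisField 2 d, chiK d (v ⬝ᵥ X) = 0 := by
  obtain ⟨i, hi⟩ : ∃ i, v i ≠ 0 := by
    by_contra hc; push_neg at hc; exact hv (funext hc)
  obtain ⟨b, hb⟩ := trace_hit hi
  have hyval : chiK d (v ⬝ᵥ Pi.single i b) = -1 := by
    have hd1 : v ⬝ᵥ Pi.single i b = v i * b := by simp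
    rw [hd1]
    exact chiK_neg_one_of_ne hb
  exact sum_eq_zero_of_neg_one _ (fun X Y => by rw [← chiK_add, dotProduct_add]) hyval

end Helpers

set_option maxHeartbeats 1000000 in
/-- value distribution of T(A) = ∑_X (-1)^{Tr(F(X) + A Xᵀ)} as A ranges
over F_{q₀}^s, where F(X) = X H Xᵀ and r = rank(H + Hᵀ): the value 0 occurs q₀^s - q₀^r
times, q₀^{s-r/2} occurs (q₀^r + q₀^{r/2})/2 times, and -q₀^{s-r/2} occurs
(q₀^r - q₀^{r/2})/2 times. -/
theorem stmt_10 (d s : ℕ) (hd : 0 < d) (hs : 0 < s) [Fintype (GaloisField 2 d)]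
    (H : Matrix (Fin s) (Fin s) (GaloisField 2 d)) (r : ℕ)
    (hr : r = (H + H.transpose).rank)
    (T : (Fin s → GaloisField 2 d) → ℤ)
    (hT : ∀ A, T A = ∑ X : Fin s → GaloisField 2 d,
        (-1 : ℤ) ^ (Algebra.trace (ZMod 2) (GaloisField 2 d)
          (X ⬝ᵥ H.mulVec X + A ⬝ᵥ X)).val) :
    {A : Fin s → GaloisField 2 d | T A = 0}.ncard = (2 ^ d) ^ s - (2 ^ d) ^ r ∧
    {A : Fin s → GaloisField 2 d | T A = ((2 : ℤ) ^ d) ^ (s - r / 2)}.ncard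
      = ((2 ^ d) ^ r + (2 ^ d) ^ (r / 2)) / 2 ∧
    {A : Fin s → GaloisField 2 d | T A = -((2 : ℤ) ^ d) ^ (s - r / 2)}.ncard
      = ((2 ^ d) ^ r - (2 ^ d) ^ (r / 2)) / 2 := by
  classical
  set B : Matrix (Fin s) (Fin s) (GaloisField 2 d) := H + H.transpose with hB
  -- basic facts
  have hchar : ∀ a : (GaloisField 2 d), a + a = 0 := by
    intro a
    have : (2 : (GaloisField 2 d)) = 0 := by
      have := CharP.cast_eq_zero (GaloisField 2 d) 2
      exact_mod_cast this
    calc a + a = 2 * a := by ring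
    _ = 0 := by rw [this, zero_mul]
  have hcard : (Fintype.card (GaloisField 2 d) : ℤ) = (2 : ℤ) ^ d := by
    have h1 : Fintype.card (GaloisField 2 d) = 2 ^ d := by
      have h2 := GaloisField.card 2 d hd.ne'
      rw [← Nat.card_eq_fintype_card]
      exact h2
    exact_mod_cast h1
  have hcardV : (Fintype.card (Fin s → (GaloisField 2 d)) : ℤ) = ((2 : ℤ) ^ d) ^ s := by
    rw [Fintype.card_pi]
    push_cast [hcard]
    simp [Finset.prod_const, hcard]
  -- dot product / mulVec identities
  have hcross : ∀ X Z : Fin s → (GaloisField 2 d), (B.mulVec Z) ⬝ᵥ X = X ⬝ᵥ H.mulVec Z + Z ⬝ᵥ H.mulVec X := by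
    intro X Z
    rw [hB, add_mulVec, add_dotProduct]
    congr 1
    · exact dotProduct_comm _ _
    · rw [dotProduct_comm, dotProduct_mulVec, vecMul_transpose, dotProduct_comm]
  have hFadd : ∀ X Z : Fin s → (GaloisField 2 d), (X + Z) ⬝ᵥ H.mulVec (X + Z)
      = X ⬝ᵥ H.mulVec X + Z ⬝ᵥ H.mulVec Z + (B.mulVec Z) ⬝ᵥ X := by
    intro X Z
    rw [hcross]
    rw [mulVec_add, add_dotProduct, dotProduct_add, dotProduct_add]
    ring
  have halt : ∀ X : Fin s → (GaloisField 2 d), (B.mulVec X) ⬝ᵥ X = 0 := by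
    intro X
    rw [hcross]
    exact hchar _
  -- T in terms of chiK
  have hTA : ∀ A, T A = ∑ X : Fin s → (GaloisField 2 d), chiK d (X ⬝ᵥ H.mulVec X + A ⬝ᵥ X) := hT
  -- Step A : total sum of T
  have hsumT : ∑ A : Fin s → (GaloisField 2 d), T A = ((2:ℤ) ^ d) ^ s := by
    have h1 : ∀ A : Fin s → (GaloisField 2 d), T A
        = ∑ X : Fin s → (GaloisField 2 d), chiK d (X ⬝ᵥ H.mulVec X) * chiK d (X ⬝ᵥ A) := by
      intro A
      rw [hTA A]
      refine Finset.sum_congr rfl (fun X _ => ?_)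
      rw [← chiK_add, dotProduct_comm X A]
    calc ∑ A : Fin s → (GaloisField 2 d), T A
        = ∑ A : Fin s → (GaloisField 2 d), ∑ X : Fin s → (GaloisField 2 d),
            chiK d (X ⬝ᵥ H.mulVec X) * chiK d (X ⬝ᵥ A) :=
          Finset.sum_congr rfl (fun A _ => h1 A)
      _ = ∑ X : Fin s → (GaloisField 2 d), chiK d (X ⬝ᵥ H.mulVec X) * ∑ A : Fin s → (GaloisField 2 d), chiK d (X ⬝ᵥ A) := by
          rw [Finset.sum_comm]
          exact Finset.sum_congr rfl (fun X _ => (Finset.mul_sum _ _ _).symm)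
      _ = ((2:ℤ) ^ d) ^ s := by
          rw [Finset.sum_eq_single (0 : Fin s → (GaloisField 2 d))]
          · rw [zero_dotProduct, chiK_zero, one_mul, sum_chi_dot_zero, hcard]
          · intro X _ hX
            rw [sum_chi_dot_ne hX, mul_zero]
          · intro h
            exact absurd (Finset.mem_univ _) h
  -- char-2 cancellation on vectors
  have hXY : ∀ X Y : Fin s → (GaloisField 2 d), X + Y = 0 ↔ Y = X := by
    intro X Y
    constructor
    · intro h
      funext i
      have h1 : X i + Y i = 0 := by simpa using congrFun h i
      have h2 := hchar (X i)
      exact add_left_cancel (h1.trans h2.symm)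
    · intro h
      subst h
      funext i
      simpa using hchar (Y i)
  have hT1 : ∀ A : Fin s → (GaloisField 2 d), T A
      = ∑ X : Fin s → (GaloisField 2 d),
          chiK d (X ⬝ᵥ H.mulVec X + A ⬝ᵥ X) := hTA
  -- Step B : total sum of T^2
  have hsumT2 : ∑ A : Fin s → (GaloisField 2 d), (T A)^2
      = ((2:ℤ) ^ d) ^ s * ((2:ℤ) ^ d) ^ s := by
    have h1 : ∀ A : Fin s → (GaloisField 2 d), (T A)^2
        = ∑ X : Fin s → (GaloisField 2 d), ∑ Y : Fin s → (GaloisField 2 d),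
            (chiK d (X ⬝ᵥ H.mulVec X) * chiK d (Y ⬝ᵥ H.mulVec Y))
              * chiK d ((X + Y) ⬝ᵥ A) := by
      intro A
      rw [pow_two, hT1 A, Finset.sum_mul_sum]
      refine Finset.sum_congr rfl (fun X _ => Finset.sum_congr rfl (fun Y _ => ?_))
      simp only [add_dotProduct, chiK_add]
      rw [dotProduct_comm X A, dotProduct_comm Y A]
      ring
    calc ∑ A : Fin s → (GaloisField 2 d), (T A)^2
        = ∑ A : Fin s → (GaloisField 2 d), ∑ X : Fin s → (GaloisField 2 d),
            ∑ Y : Fin s → (GaloisField 2 d),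
            (chiK d (X ⬝ᵥ H.mulVec X) * chiK d (Y ⬝ᵥ H.mulVec Y))
              * chiK d ((X + Y) ⬝ᵥ A) := Finset.sum_congr rfl (fun A _ => h1 A)
      _ = ∑ X : Fin s → (GaloisField 2 d), ∑ Y : Fin s → (GaloisField 2 d),
            (chiK d (X ⬝ᵥ H.mulVec X) * chiK d (Y ⬝ᵥ H.mulVec Y))
              * ∑ A : Fin s → (GaloisField 2 d), chiK d ((X + Y) ⬝ᵥ A) := by
          rw [Finset.sum_comm]
          refine Finset.sum_congr rfl (fun X _ => ?_)
          rw [Finset.sum_comm]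
          exact Finset.sum_congr rfl (fun Y _ => (Finset.mul_sum _ _ _).symm)
      _ = ∑ X : Fin s → (GaloisField 2 d), ((2:ℤ) ^ d) ^ s := by
          refine Finset.sum_congr rfl (fun X _ => ?_)
          rw [Finset.sum_eq_single X]
          · have hx0 : X + X = 0 := (hXY X X).mpr rfl
            rw [hx0, sum_chi_dot_zero, hcard, chiK_sq, one_mul]
          · intro Y _ hY
            have hne : X + Y ≠ 0 := fun hc => hY ((hXY X Y).mp hc)
            rw [sum_chi_dot_ne hne, mul_zero]
          · intro h
            exact absurd (Finset.mem_univ _) h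
      _ = ((2:ℤ) ^ d) ^ s * ((2:ℤ) ^ d) ^ s := by
          rw [Finset.sum_const, Finset.card_univ, nsmul_eq_mul, hcardV]
  -- rank and kernel
  have hrs : r + Module.finrank (GaloisField 2 d) (LinearMap.ker B.mulVecLin) = s := by
    have h1 := LinearMap.finrank_range_add_finrank_ker B.mulVecLin
    have h2 : Module.finrank (GaloisField 2 d) (Fin s → (GaloisField 2 d)) = s := by
      simp [Module.finrank_pi]
    have h3 : r = Module.finrank (GaloisField 2 d) (LinearMap.range B.mulVecLin) := hr
    omega
  have hrle : r ≤ s := by omega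
  have hkercard : (Fintype.card (LinearMap.ker B.mulVecLin) : ℤ) = ((2:ℤ) ^ d) ^ (s - r) := by
    have h1 : Fintype.card (LinearMap.ker B.mulVecLin)
        = Fintype.card (GaloisField 2 d)
            ^ Module.finrank (GaloisField 2 d) (LinearMap.ker B.mulVecLin) :=
      card_eq_pow_finrank
    have h2 : Module.finrank (GaloisField 2 d) (LinearMap.ker B.mulVecLin) = s - r := by omega
    rw [h1, h2]
    push_cast [hcard]
    ring
  -- Step C : dichotomy for each A
  have hdichot : ∀ A : Fin s → (GaloisField 2 d),
      T A = 0 ∨ (T A)^2 = ((2:ℤ) ^ d) ^ s * ((2:ℤ) ^ d) ^ (s - r) := by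
    intro A
    have e1 : (T A)^2 = ∑ X : Fin s → (GaloisField 2 d), ∑ Z : Fin s → (GaloisField 2 d),
        chiK d (Z ⬝ᵥ H.mulVec Z + A ⬝ᵥ Z) * chiK d ((B.mulVec Z) ⬝ᵥ X) := by
      rw [pow_two, hT1 A, Finset.sum_mul_sum]
      refine Finset.sum_congr rfl (fun X _ => ?_)
      have e2 : ∑ Y : Fin s → (GaloisField 2 d),
          chiK d (X ⬝ᵥ H.mulVec X + A ⬝ᵥ X) * chiK d (Y ⬝ᵥ H.mulVec Y + A ⬝ᵥ Y)
          = ∑ Z : Fin s → (GaloisField 2 d),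
          chiK d (X ⬝ᵥ H.mulVec X + A ⬝ᵥ X)
            * chiK d ((X + Z) ⬝ᵥ H.mulVec (X + Z) + A ⬝ᵥ (X + Z)) :=
        (Fintype.sum_equiv (Equiv.addLeft X) _ _ (fun Z => rfl)).symm
      rw [e2]
      refine Finset.sum_congr rfl (fun Z _ => ?_)
      rw [← chiK_add, ← chiK_add]
      congr 1
      rw [hFadd X Z, dotProduct_add]
      linear_combination hchar (X ⬝ᵥ H.mulVec X) + hchar (A ⬝ᵥ X)
    have e3 : (T A)^2 = ((2:ℤ) ^ d) ^ s
        * ∑ z : LinearMap.ker B.mulVecLin,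
            chiK d ((z : Fin s → (GaloisField 2 d)) ⬝ᵥ H.mulVec z + A ⬝ᵥ z) := by
      rw [e1, Finset.sum_comm]
      have e4 : ∀ Z : Fin s → (GaloisField 2 d),
          ∑ X : Fin s → (GaloisField 2 d),
            chiK d (Z ⬝ᵥ H.mulVec Z + A ⬝ᵥ Z) * chiK d ((B.mulVec Z) ⬝ᵥ X)
          = if B.mulVec Z = 0
              then chiK d (Z ⬝ᵥ H.mulVec Z + A ⬝ᵥ Z) * ((2:ℤ) ^ d) ^ s else 0 := by
        intro Z
        rw [← Finset.mul_sum]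
        by_cases hz : B.mulVec Z = 0
        · rw [if_pos hz, hz, sum_chi_dot_zero, hcard]
        · rw [if_neg hz, sum_chi_dot_ne hz, mul_zero]
      rw [Finset.sum_congr rfl (fun Z _ => e4 Z), Finset.sum_ite, Finset.sum_const_zero,
        add_zero, ← Finset.sum_mul, mul_comm]
      congr 1
      exact (Finset.sum_subtype _ (fun Z => by
        simp [Finset.mem_filter, LinearMap.mem_ker, Matrix.mulVecLin_apply]) _)
    set g : LinearMap.ker B.mulVecLin → ℤ :=
      fun z => chiK d ((z : Fin s → (GaloisField 2 d)) ⬝ᵥ H.mulVec z + A ⬝ᵥ z) with hg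
    have hgmul : ∀ z w : LinearMap.ker B.mulVecLin, g (z + w) = g z * g w := by
      intro z w
      simp only [hg, Submodule.coe_add]
      rw [← chiK_add]
      congr 1
      rw [hFadd, dotProduct_add]
      have hw : B.mulVec (w : Fin s → (GaloisField 2 d)) = 0 := w.2
      rw [hw, zero_dotProduct]
      ring
    by_cases hall : ∀ z : LinearMap.ker B.mulVecLin, g z = 1
    · right
      rw [e3, Finset.sum_congr rfl (fun z _ => hall z), Finset.sum_const, Finset.card_univ,
        nsmul_eq_mul, mul_one, hkercard]
    · left
      push_neg at hall
      obtain ⟨z, hz⟩ := hall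
      have hzneg : g z = -1 := (chiK_vals _).resolve_left hz
      have hzero : ∑ z : LinearMap.ker B.mulVecLin, g z = 0 :=
        sum_eq_zero_of_neg_one g hgmul hzneg
      have : (T A)^2 = 0 := by rw [e3, hzero, mul_zero]
      exact pow_eq_zero_iff (n := 2) (by norm_num) |>.mp this
  -- Step D : r is even (alternating forms have even rank)
  have hreven : Even r := by
    set β : (Fin s → GaloisField 2 d) →ₗ[GaloisField 2 d]
        (Fin s → GaloisField 2 d) →ₗ[GaloisField 2 d] (GaloisField 2 d) :=
      LinearMap.mk₂ (GaloisField 2 d) (fun x y => y ⬝ᵥ B.mulVec x)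
        (fun x₁ x₂ y => by simp [mulVec_add, dotProduct_add])
        (fun c x y => by simp [mulVec_smul, dotProduct_smul])
        (fun x y₁ y₂ => by simp [add_dotProduct])
        (fun c x y => by simp [smul_dotProduct]) with hβ
    have hβapp : ∀ x y, β x y = y ⬝ᵥ B.mulVec x := fun x y => rfl
    have hker : LinearMap.ker β = LinearMap.ker B.mulVecLin := by
      ext x
      simp only [LinearMap.mem_ker]
      constructor
      · intro h
        have h1 : ∀ y, y ⬝ᵥ B.mulVec x = 0 := by
          intro y
          rw [← hβapp]
          rw [h]
          rfl
        have h2 : B.mulVec x = 0 := by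
          funext j
          simpa using h1 (Pi.single j 1)
        rw [Matrix.mulVecLin_apply, h2]
      · intro h
        have h2 : B.mulVec x = 0 := by rw [Matrix.mulVecLin_apply] at h; exact h
        refine LinearMap.ext (fun y => ?_)
        rw [hβapp, h2, dotProduct_zero]
        simp
    have halt2 : ∀ x, β x x = 0 := by
      intro x
      rw [hβapp, dotProduct_comm]
      exact halt x
    have he := alt_ker_even' (Module.finrank (GaloisField 2 d) (Fin s → GaloisField 2 d))
      (GaloisField 2 d) (Fin s → GaloisField 2 d) β halt2 rfl
    rw [hker] at he
    have hfr : Module.finrank (GaloisField 2 d) (Fin s → GaloisField 2 d) = s := by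
      simp [Module.finrank_pi]
    rw [hfr] at he
    have : s - Module.finrank (GaloisField 2 d) (LinearMap.ker B.mulVecLin) = r := by omega
    rwa [this] at he
  -- Step E : counting
  set t : ℤ := ((2:ℤ) ^ d) ^ (s - r / 2) with ht
  obtain ⟨k, hk⟩ := hreven
  have htpos : 0 < t := pow_pos (pow_pos two_pos d) _
  have ht0 : t ≠ 0 := ne_of_gt htpos
  have htne : t ≠ -t := by
    intro h
    have h0 : t = 0 := by linarith
    exact ht0 h0
  have htsq : t ^ 2 = ((2:ℤ) ^ d) ^ s * ((2:ℤ) ^ d) ^ (s - r) := by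
    rw [ht, ← pow_mul, ← pow_add]
    congr 1
    omega
  have htri : ∀ A, T A = 0 ∨ T A = t ∨ T A = -t := by
    intro A
    rcases hdichot A with h | h
    · exact Or.inl h
    · right
      have h2 : (T A) ^ 2 = t ^ 2 := by rw [h, htsq]
      have h3 : (T A - t) * (T A + t) = 0 := by linear_combination h2
      rcases mul_eq_zero.mp h3 with h4 | h4
      · exact Or.inl (by linarith)
      · exact Or.inr (by linarith)
  set Sp := Finset.univ.filter (fun A : Fin s → GaloisField 2 d => T A = t) with hSp
  set Sm := Finset.univ.filter (fun A : Fin s → GaloisField 2 d => T A = -t) with hSm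
  set S0 := Finset.univ.filter (fun A : Fin s → GaloisField 2 d => T A = 0) with hS0
  have hkey : ∀ f : ℤ → ℤ, f 0 = 0 → ∑ A : Fin s → GaloisField 2 d, f (T A)
      = Sp.card * f t + Sm.card * f (-t) := by
    intro f hf
    have h1 : ∀ A : Fin s → GaloisField 2 d, f (T A)
        = (if T A = t then f t else 0) + (if T A = -t then f (-t) else 0) := by
      intro A
      rcases htri A with h | h | h
      · rw [h, if_neg (fun hc => ht0 hc.symm),
          if_neg (fun hc => ht0 (neg_eq_zero.mp hc.symm)), hf, add_zero]
      · rw [h, if_pos rfl, if_neg htne, add_zero]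
      · rw [h, if_neg (fun hc => htne hc.symm), if_pos rfl, zero_add]
    rw [Finset.sum_congr rfl (fun A _ => h1 A), Finset.sum_add_distrib]
    congr 1
    · rw [← Finset.sum_filter, Finset.sum_const, nsmul_eq_mul]
    · rw [← Finset.sum_filter, Finset.sum_const, nsmul_eq_mul]
  have hI1 : ((2:ℤ) ^ d) ^ s = Sp.card * t + Sm.card * (-t) := by
    rw [← hsumT]
    exact hkey (fun x => x) rfl
  have hI2 : ((2:ℤ) ^ d) ^ s * ((2:ℤ) ^ d) ^ s
      = Sp.card * t ^ 2 + Sm.card * (-t) ^ 2 := by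
    rw [← hsumT2]
    exact hkey (fun x => x ^ 2) (by norm_num)
  have hcpcm : (Sp.card : ℤ) + Sm.card = ((2:ℤ) ^ d) ^ r := by
    have e : ((Sp.card : ℤ) + Sm.card) * t ^ 2 = (((2:ℤ) ^ d) ^ r) * t ^ 2 := by
      calc ((Sp.card : ℤ) + Sm.card) * t ^ 2
          = Sp.card * t ^ 2 + Sm.card * (-t) ^ 2 := by ring
        _ = ((2:ℤ) ^ d) ^ s * ((2:ℤ) ^ d) ^ s := hI2.symm
        _ = (((2:ℤ) ^ d) ^ r) * t ^ 2 := by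
            rw [htsq, ← pow_add, ← pow_add, ← pow_add]
            congr 1
            omega
    exact mul_right_cancel₀ (pow_ne_zero 2 ht0) e
  have hcpsub : (Sp.card : ℤ) - Sm.card = ((2:ℤ) ^ d) ^ (r / 2) := by
    have e : ((Sp.card : ℤ) - Sm.card) * t = (((2:ℤ) ^ d) ^ (r / 2)) * t := by
      calc ((Sp.card : ℤ) - Sm.card) * t = Sp.card * t + Sm.card * (-t) := by ring
        _ = ((2:ℤ) ^ d) ^ s := hI1.symm
        _ = (((2:ℤ) ^ d) ^ (r / 2)) * t := by
            rw [ht, ← pow_add]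
            congr 1
            omega
    exact mul_right_cancel₀ ht0 e
  -- partition
  have hdisj1 : Disjoint Sp Sm := by
    rw [Finset.disjoint_left]
    intro A hA hA'
    rw [hSp, Finset.mem_filter] at hA
    rw [hSm, Finset.mem_filter] at hA'
    exact htne (hA.2.symm.trans hA'.2)
  have hdisj2 : Disjoint (Sp ∪ Sm) S0 := by
    rw [Finset.disjoint_left]
    intro A hA hA'
    rw [hS0, Finset.mem_filter] at hA'
    rcases Finset.mem_union.mp hA with h | h
    · rw [hSp, Finset.mem_filter] at h
      exact ht0 (h.2.symm.trans hA'.2)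
    · rw [hSm, Finset.mem_filter] at h
      have : -t = 0 := h.2.symm.trans hA'.2
      exact ht0 (neg_eq_zero.mp this)
  have hunion : Sp ∪ Sm ∪ S0 = Finset.univ := by
    ext A
    simp only [Finset.mem_union, hSp, hSm, hS0, Finset.mem_filter, Finset.mem_univ,
      true_and, iff_true]
    rcases htri A with h | h | h <;> tauto
  have hpart : Sp.card + Sm.card + S0.card = (2 ^ d) ^ s := by
    have h1 : (Sp ∪ Sm ∪ S0).card
        = (Finset.univ : Finset (Fin s → GaloisField 2 d)).card := by rw [hunion]
    rw [Finset.card_union_of_disjoint hdisj2, Finset.card_union_of_disjoint hdisj1,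
      Finset.card_univ] at h1
    have h2 : Fintype.card (Fin s → GaloisField 2 d) = (2 ^ d) ^ s := by
      exact_mod_cast hcardV
    omega
  -- ncard conversion
  have hnc : ∀ c : ℤ, {A : Fin s → GaloisField 2 d | T A = c}.ncard
      = (Finset.univ.filter (fun A : Fin s → GaloisField 2 d => T A = c)).card := by
    intro c
    rw [← Set.ncard_coe_finset]
    congr 1
    ext A
    simp
  -- final nat arithmetic
  have hn1 : Sp.card + Sm.card = (2 ^ d) ^ r := by exact_mod_cast hcpcm
  have hn2 : Sp.card = Sm.card + (2 ^ d) ^ (r / 2) := by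
    have : (Sp.card : ℤ) = Sm.card + ((2:ℤ) ^ d) ^ (r / 2) := by linarith [hcpsub]
    exact_mod_cast this
  refine ⟨?_, ?_, ?_⟩
  · rw [hnc 0, ← hS0]
    omega
  · rw [hnc t, ← hSp]
    omega
  · rw [hnc (-t), ← hSm]
    omega
end

section
/- Let q = 2^n, k a positive integer with d = gcd(n,k), s = n/d odd, and α, β ∈ F_q not both zero. The number of x ∈ F_q with α^{2^{2k}} x^{2^{4k}} + β^{2^{2k}} x^{2^{3k}} + β^{2^k} x^{2^k} + α x = 0 is either 2^d or 2^{3d}. -/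
set_option maxHeartbeats 2000000
set_option synthInstance.maxHeartbeats 400000


open Module LinearMap

theorem alt_parity_aux (E : Type*) [Field E] :
    ∀ (N : ℕ) (V : Type) (_ : AddCommGroup V), ∀ (_ : Module E V) (_ : FiniteDimensional E V),
    Module.finrank E V = N → ∀ (B : V →ₗ[E] V →ₗ[E] E), (∀ x, B x x = 0) →
    ∃ e, Module.finrank E V = Module.finrank E (LinearMap.ker B) + 2 * e := by
  intro N
  induction N using Nat.strong_induction_on with
  | _ N IH =>
    intro V _ _ _ hN B hB
    have hskew : ∀ a b, B b a = -B a b := by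
      intro a b
      have h := hB (a + b)
      simp only [map_add, LinearMap.add_apply, hB] at h
      linear_combination h
    by_cases hB0 : B = 0
    · exact ⟨0, by rw [hB0, LinearMap.ker_zero]; simp [finrank_top]⟩
    · have : ∃ x y, B x y ≠ 0 := by
        by_contra h
        push_neg at h
        exact hB0 (by ext x y; simp [h])
      obtain ⟨x, y, hxy⟩ := this
      set y' := (B x y)⁻¹ • y with hy'
      have hxy1 : B x y' = 1 := by
        simp [hy', map_smul, inv_mul_cancel₀ hxy]
      have hyx1 : B y' x = -1 := by rw [hskew, hxy1]
      set φ : V →ₗ[E] E × E := (B x).prod (B y') with hφ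
      have hφx : ∀ v, φ v = (B x v, B y' v) := fun v => rfl
      have hφsurj : Function.Surjective φ := by
        intro ⟨a, b⟩
        refine ⟨a • y' - b • x, ?_⟩
        simp [hφx, map_smul, map_sub, hB, hxy1, hyx1]
      set W := LinearMap.ker φ with hW
      have hrank : Module.finrank E V = 2 + Module.finrank E W := by
        have h1 := LinearMap.finrank_range_add_finrank_ker φ
        rw [LinearMap.range_eq_top.mpr hφsurj, finrank_top] at h1
        rw [← h1]
        congr 1
        simp [Module.finrank_prod, Module.finrank_self]
      set B' := B.domRestrict₁₂ W W with hB'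
      have hB'alt : ∀ z : W, B' z z = 0 := fun z => hB z
      have hWN : Module.finrank E W < N := by omega
      obtain ⟨e, he⟩ := IH _ hWN W inferInstance inferInstance inferInstance rfl B' hB'alt
      have hker : (LinearMap.ker B').map W.subtype = LinearMap.ker B := by
        ext v
        constructor
        · rintro ⟨⟨z, hzW⟩, hz, rfl⟩
          simp only [LinearMap.mem_ker] at hz ⊢
          ext u
          -- decompose u
          have hmemW : u + (B y' u) • x - (B x u) • y' ∈ W := by
            simp only [hW, LinearMap.mem_ker, hφx, Prod.mk_eq_zero]
            constructor <;>
              simp [map_add, map_sub, map_smul, hB, hxy1, hyx1] <;> ring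
          have h1 : B z (u + (B y' u) • x - (B x u) • y') = 0 := by
            have := congrFun (congrArg (fun f => f.toFun) hz) ⟨_, hmemW⟩
            simpa [hB', LinearMap.domRestrict₁₂_apply] using
              congrArg (fun (g : W →ₗ[E] E) => g ⟨_, hmemW⟩) hz
          have hzx : B z x = 0 := by
            have : B x z = 0 := by
              have := hzW
              simp only [hW, LinearMap.mem_ker, hφx, Prod.mk_eq_zero] at this
              exact this.1
            rw [hskew, this, neg_zero]
          have hzy' : B z y' = 0 := by
            have : B y' z = 0 := by
              have := hzW
              simp only [hW, LinearMap.mem_ker, hφx, Prod.mk_eq_zero] at this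
              exact this.2
            rw [hskew, this, neg_zero]
          have := h1
          simp only [map_add, map_sub, map_smul, smul_eq_mul, hzx, hzy'] at this
          simpa using this
        · intro hv
          simp only [LinearMap.mem_ker] at hv
          have hvW : v ∈ W := by
            simp only [hW, LinearMap.mem_ker, hφx, Prod.mk_eq_zero]
            constructor <;> · rw [hskew]; simp [hv]
          refine ⟨⟨v, hvW⟩, LinearMap.mem_ker.mpr ?_, rfl⟩
          ext u
          simp [hB', LinearMap.domRestrict₁₂_apply, hv]
      have hkerrank : Module.finrank E (LinearMap.ker B) = Module.finrank E (LinearMap.ker B') := by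
        rw [← hker]
        exact Submodule.finrank_map_subtype_eq W (LinearMap.ker B')
      exact ⟨e + 1, by omega⟩

set_option linter.unusedSectionVars false
set_option linter.unreachableTactic false
set_option linter.unusedTactic false
open Polynomial Finset

variable {F : Type} [Field F] [Fintype F] [DecidableEq F] [CharP F 2]



lemma frob_inj_pow (m : ℕ) {x y : F} (h : x ^ 2 ^ m = y ^ 2 ^ m) : x = y := by
  have h2 : (x - y) ^ 2 ^ m = 0 := by rw [sub_pow_char_pow]; simp [h]
  exact sub_eq_zero.mp ((pow_eq_zero_iff (Nat.two_pow_pos m).ne').mp h2)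

lemma pow_pow_mul {x : F} {a : ℕ} (h : x ^ 2 ^ a = x) (m : ℕ) : x ^ 2 ^ (a * m) = x := by
  induction m with
  | zero => simp
  | succ m ih =>
    have : (2:ℕ) ^ (a * (m+1)) = 2 ^ (a*m) * 2 ^ a := by rw [← pow_add]; ring_nf
    rw [this, pow_mul, ih, h]

lemma pow_gcd {x : F} {a b : ℕ} (ha : x ^ 2 ^ a = x) (hb : x ^ 2 ^ b = x) :
    x ^ 2 ^ Nat.gcd a b = x := by
  induction a using Nat.strong_induction_on generalizing b with
  | _ a IH =>
    rcases Nat.eq_zero_or_pos a with rfl | hapos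
    · simpa [Nat.gcd_zero_left] using hb
    · rw [Nat.gcd_rec]
      refine IH (b % a) (Nat.mod_lt _ hapos) ?_ ha
      -- show x ^ 2 ^ (b % a) = x
      have hdiv : a * (b / a) + b % a = b := Nat.div_add_mod b a
      have hmul : x ^ 2 ^ (a * (b / a)) = x := pow_pow_mul ha _
      apply frob_inj_pow (a * (b / a))
      calc (x ^ 2 ^ (b % a)) ^ 2 ^ (a * (b/a))
          = x ^ (2 ^ (b % a) * 2 ^ (a * (b/a))) := by rw [← pow_mul]
        _ = x ^ 2 ^ (b % a + a * (b/a)) := by rw [pow_add]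
        _ = x ^ 2 ^ b := by rw [Nat.add_comm] at hdiv; rw [hdiv]
        _ = x := hb
        _ = x ^ 2 ^ (a * (b/a)) := hmul.symm


lemma card_fix_s12 {n e : ℕ} (hcard : Fintype.card F = 2 ^ n) (hen : e ∣ n) (he : e ≠ 0)
    (hn : n ≠ 0) : Nat.card {x : F | x ^ 2 ^ e = x} = 2 ^ e := by
  classical
  set g : F[X] := X ^ 2 ^ e - X with hg
  set f : F[X] := X ^ 2 ^ n - X with hf
  have hfne : f ≠ 0 := FiniteField.X_pow_card_sub_X_ne_zero F (Nat.one_lt_two_pow hn)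
  have hdvd : g ∣ f := by
    obtain ⟨c, rfl⟩ := hen
    have h1 : (2:ℕ) ^ e - 1 ∣ 2 ^ (e * c) - 1 := by
      have := Nat.sub_dvd_pow_sub_pow (2 ^ e) 1 c
      simpa [← pow_mul] using this
    obtain ⟨m, hm⟩ := h1
    have h2 : (X : F[X]) ^ (2 ^ e - 1) - 1 ∣ X ^ (2 ^ (e * c) - 1) - 1 := by
      have := sub_dvd_pow_sub_pow ((X : F[X]) ^ (2 ^ e - 1)) 1 m
      simpa [← pow_mul, ← hm] using this
    have hgx : g = X * (X ^ (2 ^ e - 1) - 1) := by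
      rw [hg, mul_sub, mul_one, ← pow_succ']
      congr 1
      congr 1
      have : (1:ℕ) ≤ 2 ^ e := Nat.one_le_two_pow
      omega
    have hfx : f = X * (X ^ (2 ^ (e * c) - 1) - 1) := by
      rw [hf, mul_sub, mul_one, ← pow_succ']
      congr 1
      congr 1
      have : (1:ℕ) ≤ 2 ^ (e * c) := Nat.one_le_two_pow
      omega
    rw [hgx, hfx]
    exact mul_dvd_mul_left X h2
  have hroots_f : f.roots = Finset.univ.val := by
    have := FiniteField.roots_X_pow_card_sub_X F
    rwa [hcard] at this
  have hsplits_f : Splits f := by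
    rw [splits_iff_card_roots, hroots_f,
      FiniteField.X_pow_card_sub_X_natDegree_eq F (Nat.one_lt_two_pow hn)]
    simpa using hcard
  have hsplits_g : Splits g := Splits.of_dvd hsplits_f hfne hdvd
  have hgne : g ≠ 0 := FiniteField.X_pow_card_sub_X_ne_zero F (Nat.one_lt_two_pow he)
  have hcard_g : g.roots.card = 2 ^ e := by
    rw [splits_iff_card_roots.mp hsplits_g, hg]
    exact FiniteField.X_pow_card_sub_X_natDegree_eq F (Nat.one_lt_two_pow he)
  have hnodup : g.roots.Nodup := by
    have hle := roots.le_of_dvd hfne hdvd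
    rw [hroots_f] at hle
    exact Multiset.nodup_of_le hle Finset.univ.nodup
  have hset : {x : F | x ^ 2 ^ e = x} = ↑g.roots.toFinset := by
    ext x
    simp only [Set.mem_setOf_eq, Finset.coe_sort_coe, Multiset.mem_toFinset, Finset.mem_coe,
      mem_roots hgne, IsRoot.def, hg, eval_sub, eval_pow, eval_X]
    rw [← hg, mem_roots hgne, IsRoot.def, hg, eval_sub, eval_pow, eval_X, sub_eq_zero]
  rw [hset, Nat.card_coe_set_eq, Set.ncard_coe_finset,
    Multiset.toFinset_card_of_nodup hnodup, hcard_g]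

def bbAux {F : Type} [Field F] (c : ℕ → F) (A : F) (k r : ℕ) : ℕ → F
  | 0 => c (r+1)
  | m+1 => c (r - m) + bbAux c A k r m * A ^ 2 ^ ((r - m)*k)


lemma Tbound {k dd : ℕ}
    (hfix : (univ.filter (fun z : F => z ^ 2 ^ k = z)).card ≤ 2 ^ dd) :
    ∀ (r : ℕ) (c : ℕ → F), (∃ j, j ≤ r ∧ c j ≠ 0) →
      (univ.filter (fun x : F => ∑ j ∈ range (r+1), c j * x ^ 2 ^ (j*k) = 0)).card
        ≤ 2 ^ (dd*r) := by
  have hcancel : ∀ a b : F, a + b + b = a := by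
    intro a b; rw [add_assoc, CharTwo.add_self_eq_zero, add_zero]
  intro r
  induction r with
  | zero =>
    rintro c ⟨j, hj, hcj⟩
    obtain rfl : j = 0 := Nat.le_zero.mp hj
    have hsub : (univ.filter (fun x : F => ∑ j ∈ range 1, c j * x ^ 2 ^ (j*k) = 0)) ⊆ {0} := by
      intro x hx
      rw [mem_filter, Finset.sum_range_one] at hx
      have h2 : c 0 * x ^ 2 ^ (0*k) = 0 := hx.2
      rw [Nat.zero_mul, pow_zero, pow_one] at h2
      rcases mul_eq_zero.mp h2 with h | h
      · exact absurd h hcj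
      · simp [h]
    have h1 := card_le_card hsub
    rw [card_singleton] at h1
    simpa using h1
  | succ r ih =>
    rintro c ⟨j0, hj0, hcj0⟩
    set S := univ.filter (fun x : F => ∑ j ∈ range (r+2), c j * x ^ 2 ^ (j*k) = 0) with hSdef
    by_cases hS0 : ∀ x ∈ S, x = 0
    · have h1 : S.card ≤ 1 := card_le_one.mpr (fun a ha b hb => (hS0 a ha).trans (hS0 b hb).symm)
      exact h1.trans Nat.one_le_two_pow
    · push_neg at hS0
      obtain ⟨x₀, hx₀S, hx₀⟩ := hS0
      set A := x₀ ^ 2 ^ k / x₀ with hAdef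
      have hA : x₀ ^ 2 ^ k = A * x₀ := (div_mul_cancel₀ _ hx₀).symm
      have hAne : A ≠ 0 := by
        rw [hAdef]
        exact div_ne_zero (pow_ne_zero _ hx₀) hx₀
      set B : ℕ → F := fun j => if j ≤ r then bbAux c A k r (r - j) else 0 with hB
      have hBr : B r = c (r+1) := by
        rw [hB]
        simp only [le_refl, if_true, Nat.sub_self]
        rfl
      have hBgt : ∀ j, r < j → B j = 0 := by
        intro j hj; rw [hB]; simp [Nat.not_le.mpr hj]
      have hrec : ∀ j, j < r → B j = c (j+1) + B (j+1) * A ^ 2 ^ ((j+1)*k) := by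
        intro j hj
        have h1 : r - j = (r - (j+1)) + 1 := by omega
        have h2 : r - (r - (j+1)) = j + 1 := by omega
        rw [hB]
        simp only [if_pos (le_of_lt hj), if_pos (by omega : j + 1 ≤ r), h1]
        rw [bbAux, h2]
      have hrel : ∀ j, j ≤ r → c (j+1) = B j + B (j+1) * A ^ 2 ^ ((j+1)*k) := by
        intro j hj
        rcases eq_or_lt_of_le hj with rfl | hlt
        · rw [hBgt (j+1) (by omega), zero_mul, add_zero, hBr]
        · rw [hrec j hlt]
          exact (hcancel _ _).symm
      have hid : ∀ x : F, ∑ j ∈ range (r+2), c j * x ^ 2 ^ (j*k)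
          = (∑ j ∈ range (r+1), B j * (x ^ 2 ^ k + A * x) ^ 2 ^ (j*k))
            + (c 0 + B 0 * A) * x := by
        intro x
        have hexp : ∀ j : ℕ, (x ^ 2 ^ k + A * x) ^ 2 ^ (j*k)
            = x ^ 2 ^ ((j+1)*k) + A ^ 2 ^ (j*k) * x ^ 2 ^ (j*k) := by
          intro j
          rw [add_pow_char_pow, mul_pow, ← pow_mul, ← pow_add]
          congr 2
          ring
        have hLHS : ∑ j ∈ range (r+2), c j * x ^ 2 ^ (j*k)
            = (∑ j ∈ range (r+1), B j * x ^ 2 ^ ((j+1)*k))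
              + ((∑ j ∈ range (r+1), B (j+1) * A ^ 2 ^ ((j+1)*k) * x ^ 2 ^ ((j+1)*k))
              + c 0 * x) := by
          rw [Finset.sum_range_succ']
          rw [Nat.zero_mul, pow_zero, pow_one]
          rw [← add_assoc, ← Finset.sum_add_distrib]
          congr 1
          apply Finset.sum_congr rfl
          intro j hj
          rw [hrel j (Nat.lt_succ_iff.mp (mem_range.mp hj))]
          ring
        have hshift : (∑ j ∈ range (r+1), B (j+1) * A ^ 2 ^ ((j+1)*k) * x ^ 2 ^ ((j+1)*k))
            = (∑ j ∈ range (r+1), B j * A ^ 2 ^ (j*k) * x ^ 2 ^ (j*k)) + B 0 * A * x := by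
          have h1 := Finset.sum_range_succ' (fun j => B j * A ^ 2 ^ (j*k) * x ^ 2 ^ (j*k)) (r+1)
          have h2 := Finset.sum_range_succ (fun j => B j * A ^ 2 ^ (j*k) * x ^ 2 ^ (j*k)) (r+1)
          rw [hBgt (r+1) (by omega), zero_mul, zero_mul, add_zero] at h2
          rw [h2] at h1
          have h3 : B 0 * A ^ 2 ^ (0*k) * x ^ 2 ^ (0*k) = B 0 * A * x := by
            rw [Nat.zero_mul, pow_zero, pow_one, pow_one]
          rw [h3] at h1
          -- h1 : ∑ f j = ∑ f (j+1) + B 0 * A * x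
          calc (∑ j ∈ range (r+1), B (j+1) * A ^ 2 ^ ((j+1)*k) * x ^ 2 ^ ((j+1)*k))
              = (∑ j ∈ range (r+1), B (j+1) * A ^ 2 ^ ((j+1)*k) * x ^ 2 ^ ((j+1)*k))
                + B 0 * A * x + B 0 * A * x := (hcancel _ _).symm
            _ = (∑ j ∈ range (r+1), B j * A ^ 2 ^ (j*k) * x ^ 2 ^ (j*k)) + B 0 * A * x := by
                rw [← h1]
        have hRHS : (∑ j ∈ range (r+1), B j * (x ^ 2 ^ k + A * x) ^ 2 ^ (j*k))
            = (∑ j ∈ range (r+1), B j * x ^ 2 ^ ((j+1)*k))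
              + (∑ j ∈ range (r+1), B j * A ^ 2 ^ (j*k) * x ^ 2 ^ (j*k)) := by
          rw [← Finset.sum_add_distrib]
          apply Finset.sum_congr rfl
          intro j _
          rw [hexp j, mul_add]
          ring
        rw [hLHS, hshift, hRHS]
        ring
      have hx₀ker : ∑ j ∈ range (r+2), c j * x₀ ^ 2 ^ (j*k) = 0 := (mem_filter.mp hx₀S).2
      have hphix₀ : x₀ ^ 2 ^ k + A * x₀ = 0 := by
        rw [hA, CharTwo.add_self_eq_zero]
      have hrho : c 0 + B 0 * A = 0 := by
        have h := hid x₀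
        rw [hx₀ker, hphix₀] at h
        have hz : ∀ j ∈ Finset.range (r+1), B j * (0:F) ^ 2 ^ (j*k) = 0 := by
          intro j _
          rw [zero_pow (Nat.two_pow_pos _).ne', mul_zero]
        rw [Finset.sum_congr rfl hz, Finset.sum_const_zero, zero_add] at h
        rcases mul_eq_zero.mp h.symm with h' | h'
        · exact h'
        · exact absurd h' hx₀
      have hBne : ∃ j, j ≤ r ∧ B j ≠ 0 := by
        by_contra hall
        push_neg at hall
        have hBzero : ∀ j, B j = 0 := by
          intro j
          rcases le_or_gt j r with h | h
          · exact hall j h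
          · exact hBgt j h
        have hczero : ∀ j, j ≤ r + 1 → c j = 0 := by
          intro j hj
          rcases Nat.eq_zero_or_pos j with rfl | hpos
          · have h := hrho; rw [hBzero 0, zero_mul, add_zero] at h; exact h
          · obtain ⟨j', rfl⟩ := Nat.exists_eq_succ_of_ne_zero hpos.ne'
            rw [hrel j' (by omega), hBzero, hBzero, zero_mul, add_zero]
        exact hcj0 (hczero j0 hj0)
      have hT := ih B hBne
      set T := univ.filter (fun x : F => ∑ j ∈ range (r+1), B j * x ^ 2 ^ (j*k) = 0) with hTdef
      set φ : F → F := fun x => x ^ 2 ^ k + A * x with hφ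
      have himg : S.image φ ⊆ T := by
        intro a ha
        obtain ⟨x, hxS, rfl⟩ := mem_image.mp ha
        have hx := (mem_filter.mp hxS).2
        rw [hid x, hrho, zero_mul, add_zero] at hx
        exact mem_filter.mpr ⟨mem_univ _, hx⟩
      have hfiber : ∀ a ∈ S.image φ, (S.filter (fun x => φ x = a)).card ≤ 2 ^ dd := by
        intro a _
        rcases Finset.eq_empty_or_nonempty (S.filter (fun x => φ x = a)) with he | ⟨x', hx'⟩
        · rw [he]; simp
        · have hx'f := (mem_filter.mp hx').2
          apply le_trans _ hfix
          apply card_le_card_of_injOn (fun u => (u + x') / x₀)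
          · intro u hu
            have huf := (mem_filter.mp hu).2
            have hker : (u + x') ^ 2 ^ k = A * (u + x') := by
              have hsum : φ u + φ x' = 0 := by rw [huf, hx'f, CharTwo.add_self_eq_zero]
              rw [hφ] at hsum
              simp only at hsum
              rw [add_pow_char_pow]
              have h3 : u ^ 2 ^ k + x' ^ 2 ^ k = A * u + A * x' := by
                have h4 : (u ^ 2 ^ k + x' ^ 2 ^ k) + (A * u + A * x') = 0 := by
                  rw [← hsum]; ring
                rw [add_eq_zero_iff_eq_neg] at h4
                rw [h4, CharTwo.neg_eq]
              rw [h3]; ring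
            apply mem_filter.mpr
            refine ⟨mem_univ _, ?_⟩
            rw [div_pow, hker, hA, mul_div_mul_left _ _ hAne]
          · intro u hu v hv huv
            have h5 := congrArg (· * x₀) huv
            simp only [div_mul_cancel₀ _ hx₀] at h5
            exact add_right_cancel h5
      have hcard := Finset.card_le_mul_card_image (f := φ) S (2^dd) hfiber
      have himgcard : (S.image φ).card ≤ T.card := card_le_card himg
      calc S.card ≤ 2 ^ dd * (S.image φ).card := hcard
        _ ≤ 2 ^ dd * T.card := Nat.mul_le_mul_left _ himgcard
        _ ≤ 2 ^ dd * 2 ^ (dd * r) := Nat.mul_le_mul_left _ hT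
        _ = 2 ^ (dd * (r+1)) := by rw [← pow_add]; ring_nf



lemma pow_pow_mul' {x : F} {a : ℕ} (h : x ^ 2 ^ a = x) (m : ℕ) : x ^ 2 ^ (a * m) = x := by
  induction m with
  | zero => simp
  | succ m ih =>
    have h2 : (2:ℕ) ^ (a * (m+1)) = 2 ^ (a*m) * 2 ^ a := by rw [← pow_add]; ring_nf
    rw [h2, pow_mul, ih, h]

section Tr
variable (d s : ℕ)

noncomputable def TrF (z : F) : F := ∑ i ∈ range s, z ^ 2 ^ (d*i)

variable {d s}

lemma TrF_add (y z : F) : TrF d s (y + z) = TrF d s y + TrF d s z := by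
  rw [TrF, TrF, TrF, ← Finset.sum_add_distrib]
  exact Finset.sum_congr rfl (fun i _ => add_pow_char_pow ..)

lemma TrF_zero : TrF d s (0 : F) = 0 := by
  rw [TrF]
  apply Finset.sum_eq_zero
  intro i _
  exact zero_pow (Nat.two_pow_pos _).ne'

lemma TrF_smul {c : F} (hc : c ^ 2 ^ d = c) (z : F) : TrF d s (c * z) = c * TrF d s z := by
  rw [TrF, TrF, Finset.mul_sum]
  refine Finset.sum_congr rfl (fun i _ => ?_)
  rw [mul_pow]
  congr 1
  exact pow_pow_mul' hc i

lemma TrF_frob {n : ℕ} (hds : n = d * s) (hpow : ∀ x : F, x ^ 2 ^ n = x) (z : F) :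
    TrF d s (z ^ 2 ^ d) = TrF d s z := by
  have hterm : ∀ i : ℕ, (z ^ 2 ^ d) ^ 2 ^ (d*i) = z ^ 2 ^ (d*(i+1)) := by
    intro i
    rw [← pow_mul, ← pow_add]
    congr 1
    ring
  rw [TrF, Finset.sum_congr rfl (fun i _ => hterm i)]
  have h1 := Finset.sum_range_succ' (fun i => z ^ 2 ^ (d*i)) s
  have h2 := Finset.sum_range_succ (fun i => z ^ 2 ^ (d*i)) s
  have hs : z ^ 2 ^ (d * s) = z := by rw [← hds]; exact hpow z
  have h0 : z ^ 2 ^ (d * 0) = z := by norm_num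
  rw [hs] at h2
  rw [h0] at h1
  rw [h2] at h1
  -- h1 : ∑_{i<s} z^2^(d*i) + z = ∑_{i<s} z^(2^(d*(i+1))) + z
  have := add_right_cancel h1
  rw [TrF, ← this]

lemma TrF_frob_pow {n : ℕ} (hds : n = d * s) (hpow : ∀ x : F, x ^ 2 ^ n = x) (j : ℕ) (z : F) :
    TrF d s (z ^ 2 ^ (d*j)) = TrF d s z := by
  induction j with
  | zero => norm_num
  | succ j ih =>
    have h3 : z ^ 2 ^ (d*(j+1)) = (z ^ 2 ^ (d*j)) ^ 2 ^ d := by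
      rw [← pow_mul, ← pow_add, Nat.mul_succ]
    rw [h3, TrF_frob hds hpow, ih]

lemma TrF_pow_mem {n : ℕ} (hds : n = d * s) (hpow : ∀ x : F, x ^ 2 ^ n = x) (z : F) :
    (TrF d s z) ^ 2 ^ d = TrF d s z := by
  have h1 : (TrF d s z) ^ 2 ^ d = TrF d s (z ^ 2 ^ d) := by
    rw [TrF, TrF]
    rw [sum_pow_char_pow]
    refine Finset.sum_congr rfl (fun i _ => ?_)
    rw [← pow_mul, ← pow_mul, mul_comm (2^(d*i)) (2^d), pow_mul]
  rw [h1, TrF_frob hds hpow]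

lemma TrF_exists (hd : d ≠ 0) (hs : s ≠ 0) {n : ℕ} (hds : n = d * s)
    (hcard : Fintype.card F = 2 ^ n) : ∃ w : F, TrF d s w ≠ 0 := by
  by_contra hall
  push_neg at hall
  set P : F[X] := ∑ i ∈ range s, X ^ 2 ^ (d*i) with hP
  have heval : ∀ w : F, P.eval w = TrF d s w := by
    intro w
    rw [hP, eval_finset_sum]
    simp [TrF]
  have hdeg : P.natDegree < Fintype.card F := by
    have h1 : P.natDegree ≤ 2 ^ (d*(s-1)) := by
      apply Polynomial.natDegree_sum_le_of_forall_le
      intro i hi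
      rw [Polynomial.natDegree_X_pow]
      refine Nat.pow_le_pow_right (by norm_num) (Nat.mul_le_mul_left d ?_)
      have := mem_range.mp hi
      omega
    have h2 : (2:ℕ) ^ (d*(s-1)) < 2 ^ n := by
      apply Nat.pow_lt_pow_right (by norm_num)
      rw [hds]
      have h4 : d*(s-1) + d = d*s := by
        rw [← Nat.mul_succ]
        congr 1
        omega
      have hd' := Nat.pos_of_ne_zero hd
      omega
    rw [hcard]
    exact lt_of_le_of_lt h1 h2
  have hPzero : P = 0 := by
    exact Polynomial.eq_zero_of_natDegree_lt_card_of_eval_eq_zero P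
      (f := (id : F → F)) Function.injective_id
      (fun i => by rw [heval]; exact hall i) hdeg
  have hcoeff : P.coeff 1 = 1 := by
    rw [hP, Polynomial.finset_sum_coeff]
    have : ∀ i ∈ range s, (X ^ 2 ^ (d*i) : F[X]).coeff 1 = if i = 0 then 1 else 0 := by
      intro i _
      rw [Polynomial.coeff_X_pow]
      rcases eq_or_ne i 0 with rfl | hi0
      · simp
      · rw [if_neg hi0, if_neg]
        intro hcontra
        have h5 := Nat.one_lt_two_pow (Nat.mul_ne_zero hd hi0)
        omega
    rw [Finset.sum_congr rfl this, Finset.sum_ite_eq' (range s) 0 (fun _ => (1:F))]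
    simp [Nat.pos_of_ne_zero hs]
  rw [hPzero] at hcoeff
  simp at hcoeff


theorem main_aux (n k d : ℕ) (hn : 0 < n) (hk : 0 < k) (hd : d = Nat.gcd n k)
    (hodd : Odd (n / d)) (hcard : Fintype.card F = 2 ^ n)
    (α β : F) (hαβ : ¬(α = 0 ∧ β = 0)) :
    {x : F | α ^ 2 ^ (2*k) * x ^ 2 ^ (4*k) + β ^ 2 ^ (2*k) * x ^ 2 ^ (3*k)
      + β ^ 2 ^ k * x ^ 2 ^ k + α * x = 0}.ncard = 2 ^ d ∨
    {x : F | α ^ 2 ^ (2*k) * x ^ 2 ^ (4*k) + β ^ 2 ^ (2*k) * x ^ 2 ^ (3*k)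
      + β ^ 2 ^ k * x ^ 2 ^ k + α * x = 0}.ncard = 2 ^ (3*d) := by
  -- basic arithmetic setup
  have hd0 : d ≠ 0 := by
    rw [hd]
    exact (Nat.gcd_pos_of_pos_left k hn).ne'
  have hdn : d ∣ n := hd ▸ Nat.gcd_dvd_left n k
  have hdk : d ∣ k := hd ▸ Nat.gcd_dvd_right n k
  set s := n / d with hsdef
  set t := k / d with htdef
  have hds : n = d * s := (Nat.mul_div_cancel' hdn).symm
  have hkt : k = d * t := (Nat.mul_div_cancel' hdk).symm
  have hs0 : s ≠ 0 := by
    intro h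
    rw [h, Nat.mul_zero] at hds
    omega
  have hpow : ∀ x : F, x ^ 2 ^ n = x := fun x => by
    have h := FiniteField.pow_card x
    rwa [hcard] at h
  have hfixiff : ∀ x : F, x ^ 2 ^ k = x ↔ x ^ 2 ^ d = x := by
    intro x
    constructor
    · intro h
      have := pow_gcd (hpow x) h
      rwa [← hd] at this
    · intro h
      rw [hkt]
      exact pow_pow_mul h t
  -- the fixed subfield
  set E : Subfield F :=
    { carrier := {x : F | x ^ 2 ^ d = x}
      mul_mem' := by
        intro a b ha hb
        simp only [Set.mem_setOf_eq] at *
        rw [mul_pow, ha, hb]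
      one_mem' := by simp
      add_mem' := by
        intro a b ha hb
        simp only [Set.mem_setOf_eq] at *
        rw [add_pow_char_pow, ha, hb]
      zero_mem' := by
        simp only [Set.mem_setOf_eq]
        exact zero_pow (Nat.two_pow_pos _).ne'
      neg_mem' := by
        intro a ha
        rwa [CharTwo.neg_eq]
      inv_mem' := by
        intro a ha
        simp only [Set.mem_setOf_eq] at *
        rw [inv_pow, ha] } with hE
  haveI : Fintype E := Fintype.ofFinite _
  have hcardE : Fintype.card E = 2 ^ d := by
    rw [← Nat.card_eq_fintype_card]
    exact card_fix_s12 hcard hdn hd0 hn.ne'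
  have hmemE : ∀ z : F, z ∈ E ↔ z ^ 2 ^ d = z := fun z => Iff.rfl
  set L : F → F := fun x => α ^ 2 ^ (2*k) * x ^ 2 ^ (4*k) + β ^ 2 ^ (2*k) * x ^ 2 ^ (3*k)
      + β ^ 2 ^ k * x ^ 2 ^ k + α * x with hL
  have hEfix : ∀ c : F, c ^ 2 ^ d = c → ∀ j : ℕ, c ^ 2 ^ (j*k) = c := by
    intro c hc j
    rw [hkt, show j*(d*t) = d*(j*t) by ring]
    exact pow_pow_mul hc (j*t)
  have hL_add : ∀ x y : F, L (x + y) = L x + L y := by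
    intro x y
    simp only [hL]
    rw [add_pow_char_pow, add_pow_char_pow, add_pow_char_pow]
    ring
  have hL_smul : ∀ c : F, c ^ 2 ^ d = c → ∀ x, L (c * x) = c * L x := by
    intro c hc x
    have h4 := hEfix c hc 4
    have h3 := hEfix c hc 3
    have h1 := hEfix c hc 1
    rw [one_mul] at h1
    simp only [hL]
    rw [mul_pow, mul_pow, mul_pow, h4, h3, h1]
    ring
  -- trace facts specialized
  have hTr_sigma : ∀ (j : ℕ) (z : F), TrF d s (z ^ 2 ^ (j*k)) = TrF d s z := by
    intro j z
    rw [hkt, show j*(d*t) = d*(j*t) by ring]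
    exact TrF_frob_pow hds hpow (j*t) z
  -- the E-valued trace
  set TrE : F → E := fun z => ⟨TrF d s z, TrF_pow_mem hds hpow z⟩ with hTrE
  have hTrE_coe : ∀ z : F, (TrE z : F) = TrF d s z := fun z => rfl
  -- the bilinear map
  set Bmap : F → F → F := fun x y => TrF d s (y ^ 2 ^ (2*k) * L x) with hBmap
  have halt : ∀ x : F, Bmap x x = 0 := by
    intro x
    have hrw : x ^ 2 ^ (2*k) * L x
        = (α * x ^ 2 ^ (2*k) * x) ^ 2 ^ (2*k) + ((β * x ^ 2 ^ k * x) ^ 2 ^ (2*k)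
          + ((β * x ^ 2 ^ k * x) ^ 2 ^ (1*k) + (α * x ^ 2 ^ (2*k) * x))) := by
      have e1 : ((x : F) ^ 2 ^ (2*k)) ^ 2 ^ (2*k) = x ^ 2 ^ (4*k) := by
        rw [← pow_mul, ← pow_add]
        congr 1
        ring
      have e2 : ((x : F) ^ 2 ^ k) ^ 2 ^ (2*k) = x ^ 2 ^ (3*k) := by
        rw [← pow_mul, ← pow_add]
        congr 1
        ring
      have e3 : ((x : F) ^ 2 ^ k) ^ 2 ^ (1*k) = x ^ 2 ^ (2*k) := by
        rw [← pow_mul, ← pow_add]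
        congr 1
        ring
      have e4 : ((x : F) : F) ^ 2 ^ (1*k) = x ^ 2 ^ k := by
        rw [one_mul]
      simp only [hL]
      rw [mul_pow, mul_pow, mul_pow, mul_pow, mul_pow, mul_pow, e1, e2, e3, e4]
      ring
    rw [hBmap]
    simp only
    rw [hrw, TrF_add, TrF_add, TrF_add, hTr_sigma 2, hTr_sigma 2, hTr_sigma 1]
    set u := TrF d s (α * x ^ 2 ^ (2*k) * x)
    set v := TrF d s (β * x ^ 2 ^ k * x)
    rw [show u + (v + (v + u)) = (u + u) + (v + v) by ring,
      CharTwo.add_self_eq_zero, CharTwo.add_self_eq_zero, add_zero]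
  have hker_iff : ∀ x : F, (∀ y : F, Bmap x y = 0) ↔ L x = 0 := by
    intro x
    constructor
    · intro hall
      by_contra hLx
      obtain ⟨w, hw⟩ := TrF_exists hd0 hs0 hds hcard
      have hsurj : Function.Surjective (fun y : F => y ^ 2 ^ (2*k)) := by
        have hinj : Function.Injective (fun y : F => y ^ 2 ^ (2*k)) :=
          fun a b h => frob_inj_pow (2*k) h
        exact Finite.surjective_of_injective hinj
      obtain ⟨y, hy⟩ := hsurj (w / L x)
      have h := hall y
      rw [hBmap] at h
      simp only at h
      simp only at hy
      rw [hy, div_mul_cancel₀ _ hLx] at h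
      exact hw h
    · intro h0 y
      rw [hBmap]
      simp only
      rw [h0, mul_zero, TrF_zero]
  -- package as E-bilinear map
  set Bform : F →ₗ[E] F →ₗ[E] E := LinearMap.mk₂ E (fun x y => TrE (y ^ 2 ^ (2*k) * L x))
    (by
      intro x₁ x₂ y
      apply Subtype.ext
      show TrF d s (y ^ 2 ^ (2*k) * L (x₁ + x₂)) = _
      rw [hL_add, mul_add, TrF_add]
      rfl)
    (by
      intro c x y
      apply Subtype.ext
      show TrF d s (y ^ 2 ^ (2*k) * L ((c : F) * x)) = (c : F) * TrF d s (y ^ 2 ^ (2*k) * L x)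
      rw [hL_smul (c : F) c.2, mul_left_comm, TrF_smul c.2])
    (by
      intro x y₁ y₂
      apply Subtype.ext
      show TrF d s ((y₁ + y₂) ^ 2 ^ (2*k) * L x) = _
      rw [add_pow_char_pow, add_mul, TrF_add]
      rfl)
    (by
      intro c x y
      apply Subtype.ext
      show TrF d s (((c : F) * y) ^ 2 ^ (2*k) * L x) = (c : F) * TrF d s (y ^ 2 ^ (2*k) * L x)
      rw [mul_pow, hEfix (c : F) c.2 2, mul_assoc, TrF_smul c.2])
    with hBform
  have hBform_apply : ∀ x y : F, ((Bform x y : E) : F) = Bmap x y := fun x y => rfl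
  -- kernel of Bform is the solution set
  have hKset : ((LinearMap.ker Bform : Submodule E F) : Set F) = {x : F | L x = 0} := by
    ext x
    simp only [SetLike.mem_coe, LinearMap.mem_ker, Set.mem_setOf_eq]
    constructor
    · intro h
      apply (hker_iff x).mp
      intro y
      calc Bmap x y = ((Bform x y : E) : F) := (hBform_apply x y).symm
        _ = ((0 : E) : F) := by rw [h]; rfl
        _ = 0 := rfl
    · intro h
      apply LinearMap.ext
      intro y
      apply Subtype.ext
      show ((Bform x y : E) : F) = _
      rw [hBform_apply]
      have h9 := (hker_iff x).mpr h y
      rw [h9]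
      rfl
  haveI : FiniteDimensional E F := by
    have : Finite F := inferInstance
    exact Module.Finite.of_finite
  have halt' : ∀ x : F, Bform x x = 0 := fun x =>
    Subtype.ext ((hBform_apply x x).trans (halt x))
  obtain ⟨e, he⟩ := alt_parity_aux E (Module.finrank E F) F inferInstance inferInstance
    inferInstance rfl Bform halt'
  set m := Module.finrank E (LinearMap.ker Bform) with hm
  have hfr : Module.finrank E F = s := by
    have h1 : Fintype.card F = Fintype.card E ^ Module.finrank E F := card_eq_pow_finrank
    rw [hcard, hcardE, ← pow_mul] at h1
    have h2 : n = d * Module.finrank E F := Nat.pow_right_injective (le_refl 2) h1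
    rw [hds] at h2
    exact (Nat.eq_of_mul_eq_mul_left (Nat.pos_of_ne_zero hd0) h2).symm
  haveI : Fintype (LinearMap.ker Bform) := Fintype.ofFinite _
  have hcK : Fintype.card (LinearMap.ker Bform) = 2 ^ (d * m) := by
    rw [card_eq_pow_finrank (K := E) (V := LinearMap.ker Bform), hcardE, ← pow_mul]
  have hncard : {x : F | L x = 0}.ncard = 2 ^ (d * m) := by
    rw [← hKset]
    have h10 : Nat.card (LinearMap.ker Bform) = 2 ^ (d*m) := by
      rw [Nat.card_eq_fintype_card, hcK]
    calc ((LinearMap.ker Bform : Submodule E F) : Set F).ncard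
        = Nat.card ((LinearMap.ker Bform : Submodule E F) : Set F) :=
          (Nat.card_coe_set_eq _).symm
      _ = Nat.card (LinearMap.ker Bform) := by rw [SetLike.coe_sort_coe]
      _ = 2 ^ (d*m) := h10
  -- upper bound via Tbound
  set cfun : ℕ → F := fun j => if j = 0 then α else if j = 1 then β ^ 2 ^ k
      else if j = 3 then β ^ 2 ^ (2*k) else if j = 4 then α ^ 2 ^ (2*k) else 0 with hcfun
  have hsum : ∀ x : F, ∑ j ∈ range 5, cfun j * x ^ 2 ^ (j*k) = L x := by
    intro x
    rw [show (5:ℕ) = 4+1 from rfl, Finset.sum_range_succ, Finset.sum_range_succ,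
      Finset.sum_range_succ, Finset.sum_range_succ, Finset.sum_range_one]
    simp only [hcfun, hL]
    norm_num
    ring
  have hcne : ∃ j, j ≤ 4 ∧ cfun j ≠ 0 := by
    rcases not_and_or.mp hαβ with h | h
    · refine ⟨0, by norm_num, ?_⟩
      simpa [hcfun] using h
    · refine ⟨1, by norm_num, ?_⟩
      simp only [hcfun]
      norm_num
      exact h
  have hfixcard : (univ.filter (fun z : F => z ^ 2 ^ k = z)).card ≤ 2 ^ d := by
    have heq : (univ.filter (fun z : F => z ^ 2 ^ k = z))
        = (univ.filter (fun z : F => z ^ 2 ^ d = z)) := by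
      apply Finset.filter_congr
      intro z _
      simpa using hfixiff z
    rw [heq]
    have h7 := card_fix_s12 (F := F) hcard hdn hd0 hn.ne'
    rw [Nat.card_coe_set_eq, Set.ncard_eq_toFinset_card', Set.toFinset_setOf] at h7
    exact le_of_eq h7
  have hbound : {x : F | L x = 0}.ncard ≤ 2 ^ (d * 4) := by
    have h8 := Tbound hfixcard 4 cfun hcne
    have heqset : {x : F | L x = 0} = {x : F | ∑ j ∈ range 5, cfun j * x ^ 2 ^ (j*k) = 0} := by
      ext x
      rw [Set.mem_setOf_eq, Set.mem_setOf_eq, hsum]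
    rw [heqset, Set.ncard_eq_toFinset_card', Set.toFinset_setOf]
    exact h8
  have hm4 : m ≤ 4 := by
    rw [hncard] at hbound
    have h11 := (Nat.pow_le_pow_iff_right (by norm_num : 1 < 2)).mp hbound
    exact Nat.le_of_mul_le_mul_left h11 (Nat.pos_of_ne_zero hd0)
  have hsm : s = m + 2 * e := by rw [← hfr, he]
  obtain ⟨c0, hc0⟩ := hodd
  have hm13 : m = 1 ∨ m = 3 := by omega
  have hsetEq : {x : F | α ^ 2 ^ (2*k) * x ^ 2 ^ (4*k) + β ^ 2 ^ (2*k) * x ^ 2 ^ (3*k)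
      + β ^ 2 ^ k * x ^ 2 ^ k + α * x = 0} = {x : F | L x = 0} := rfl
  rcases hm13 with h | h
  · left
    rw [hsetEq, hncard, h, mul_one]
  · right
    rw [hsetEq, hncard, h]
    congr 1
    ring




/-- for (α,β) ≠ (0,0), with d = gcd(n,k), n/d odd and k ∉ {n/3, 2n/3},
the number of x ∈ F_{2^n} with α^{2^{2k}} x^{2^{4k}} + β^{2^{2k}} x^{2^{3k}}
+ β^{2^k} x^{2^k} + α x = 0 is either 2^d or 2^{3d}. -/
theorem stmt_12 (n k : ℕ) (hn : 0 < n) (hk : 0 < k) (d : ℕ) (hd : d = Nat.gcd n k)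
    (hodd : Odd (n / d)) (hk1 : 3 * k ≠ n) (hk2 : 3 * k ≠ 2 * n)
    (α β : GaloisField 2 n) (hαβ : (α, β) ≠ (0, 0)) :
    {x : GaloisField 2 n |
        α ^ (2 ^ (2 * k)) * x ^ (2 ^ (4 * k)) + β ^ (2 ^ (2 * k)) * x ^ (2 ^ (3 * k))
          + β ^ (2 ^ k) * x ^ (2 ^ k) + α * x = 0}.ncard = 2 ^ d ∨
    {x : GaloisField 2 n |
        α ^ (2 ^ (2 * k)) * x ^ (2 ^ (4 * k)) + β ^ (2 ^ (2 * k)) * x ^ (2 ^ (3 * k))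
          + β ^ (2 ^ k) * x ^ (2 ^ k) + α * x = 0}.ncard = 2 ^ (3 * d) := by
  haveI : Fintype (GaloisField 2 n) := Fintype.ofFinite _
  haveI : DecidableEq (GaloisField 2 n) := Classical.decEq _
  have hcard : Fintype.card (GaloisField 2 n) = 2 ^ n := by
    rw [← Nat.card_eq_fintype_card]
    exact GaloisField.card 2 n hn.ne'
  have hab : ¬(α = 0 ∧ β = 0) := by
    intro ⟨h1, h2⟩
    exact hαβ (by rw [h1, h2])
  exact main_aux n k d hn hk hd hodd hcard α β hab
end Tr
end
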